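/- arXiv:2112.09122 — 4 statements merged into one kernel-verified Lean document; each statement's English description precedes it below -/
import Mathlib

section
/- Let N ≥ 1, let τ be the N-cycle on {0,1,…,N−1} sending i to i+1 mod N, and let g be any permutation of {0,1,…,N−1}. Then #(g) + #(τ g⁻¹) = N + 1 if and only if g is non-crossing. Equivalently, d(e,g) + d(g,τ) = d(e,τ) = N − 1 holds exactly when g is non-crossing. -/
noncomputable def cycleCount {α : Type*} (g : Equiv.Perm α) : ℕ :=
  Nat.card (Quotient (Setoid.mk g.SameCycle
    ⟨fun x => Equiv.Perm.SameCycle.refl g x,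
     fun h => h.symm,
     fun h₁ h₂ => h₁.trans h₂⟩))

/-- The Cayley distance `d(g,h) = N - #(g h⁻¹)` on the permutations of a finite set. -/
noncomputable def cayley {α : Type*} (g h : Equiv.Perm α) : ℕ :=
  Nat.card α - cycleCount (g * h⁻¹)

/-- A permutation of `{0 < 1 < ... < N-1}` is non-crossing if (i) its orbit partition is
non-crossing and (ii) it maps each element to the cyclic successor within its orbit. -/
def IsNonCrossing {N : ℕ} (g : Equiv.Perm (Fin N)) : Prop :=
  (∀ a b c d : Fin N, a < b → b < c → c < d →
      g.SameCycle a c → g.SameCycle b d → g.SameCycle a b) ∧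
  (∀ x : Fin N,
    ((∃ y, g.SameCycle x y ∧ x < y) →
      IsLeast {y | g.SameCycle x y ∧ x < y} (g x)) ∧
    ((¬ ∃ y, g.SameCycle x y ∧ x < y) →
      IsLeast {y | g.SameCycle x y} (g x)))

namespace Biane

open Equiv Equiv.Perm

open Equiv Equiv.Perm

variable {α β : Type*}

/-- The setoid underlying `cycleCount`. -/
abbrev ccS (g : Perm α) : Setoid α := Setoid.mk g.SameCycle
    ⟨fun x => Equiv.Perm.SameCycle.refl g x,
     fun h => h.symm,
     fun h₁ h₂ => h₁.trans h₂⟩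

lemma cycleCount_def (g : Perm α) : cycleCount g = Nat.card (Quotient (ccS g)) := rfl

lemma cc_eq_of_rel_iff (e : β ≃ α) (f : Perm β) (g : Perm α)
    (h : ∀ x y, f.SameCycle x y ↔ g.SameCycle (e x) (e y)) :
    cycleCount f = cycleCount g := by
  rw [cycleCount_def, cycleCount_def]
  apply Nat.card_eq_of_bijective (Quotient.map' e fun x y hxy => (h x y).1 hxy)
  constructor
  · rintro ⟨x⟩ ⟨y⟩ hq
    exact Quotient.sound ((h x y).2 (Quotient.exact hq))
  · rintro ⟨z⟩
    exact ⟨Quotient.mk _ (e.symm z), Quotient.sound (by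
      simpa using Equiv.Perm.SameCycle.refl g z)⟩

lemma cycleCount_inv (g : Perm α) : cycleCount g⁻¹ = cycleCount g :=
  cc_eq_of_rel_iff (Equiv.refl α) _ _ (fun _ _ => Equiv.Perm.sameCycle_inv)

lemma cycleCount_pos [Finite α] [Nonempty α] (g : Perm α) : 1 ≤ cycleCount g := by
  rw [cycleCount_def]
  have : Nonempty (Quotient (ccS g)) := Nonempty.map (Quotient.mk _) ‹Nonempty α›
  exact Nat.card_pos

lemma cycleCount_le_card [Finite α] (g : Perm α) : cycleCount g ≤ Nat.card α := by
  rw [cycleCount_def]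
  exact Nat.card_le_card_of_surjective _ (Quotient.mk_surjective)

lemma sameCycle_of_fix (g : Perm α) {k z : α} (hk : g k = k)
    (h : g.SameCycle k z) : z = k := by
  obtain ⟨i, hi⟩ := h
  rw [Equiv.Perm.zpow_apply_eq_self_of_apply_eq_self hk] at hi
  exact hi.symm

lemma two_mul_cycleCount_le [Finite α] (g : Perm α) (hg : ∀ x, g x ≠ x) :
    2 * cycleCount g ≤ Nat.card α := by
  classical
  have key : Function.Injective
      (Sum.elim (fun q : Quotient (ccS g) => q.out)
        (fun q : Quotient (ccS g) => g q.out)) := by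
    rintro (q | q) (q' | q') h <;> simp only [Sum.elim_inl, Sum.elim_inr] at h
    · exact congrArg Sum.inl (Quotient.out_injective h)
    · exfalso
      have h1 : (Quotient.mk (ccS g) q.out) = Quotient.mk (ccS g) (g q'.out) := by
        rw [h]
      have h2 : (Quotient.mk (ccS g) (g q'.out)) = Quotient.mk (ccS g) q'.out :=
        Quotient.sound (Equiv.Perm.SameCycle.symm ⟨1, by simp⟩)
      have : q = q' := by
        rw [← Quotient.out_eq q, ← Quotient.out_eq q', h1, h2]
      subst this
      exact hg q.out h.symm
    · exfalso
      have h2 : (Quotient.mk (ccS g) (g q.out)) = Quotient.mk (ccS g) q.out :=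
        Quotient.sound (Equiv.Perm.SameCycle.symm ⟨1, by simp⟩)
      have h1 : (Quotient.mk (ccS g) (g q.out)) = Quotient.mk (ccS g) q'.out := by
        rw [h]
      have : q = q' := by
        rw [← Quotient.out_eq q, ← Quotient.out_eq q', ← h1, h2]
      subst this
      exact hg q.out h
    · exact congrArg Sum.inr (Quotient.out_injective (g.injective h))
  have := Nat.card_le_card_of_injective _ key
  rw [Nat.card_sum, ← cycleCount_def] at this
  omega

lemma cc_del_of_nfix [Finite α] (g : Perm α) (gg : Perm β) (k : α)
    (j : β → α) (hj : Function.Injective j)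
    (hsurj : ∀ z, z ≠ k → ∃ x, j x = z)
    (corr : ∀ x y, gg.SameCycle x y ↔ g.SameCycle (j x) (j y))
    (hfix : g k ≠ k) : cycleCount g = cycleCount gg := by
  rw [cycleCount_def, cycleCount_def]
  refine (Nat.card_eq_of_bijective (Quotient.map' j fun x y hxy => (corr x y).1 hxy) ?_).symm
  constructor
  · rintro ⟨x⟩ ⟨y⟩ hq
    exact Quotient.sound ((corr x y).2 (Quotient.exact hq))
  · rintro ⟨z⟩
    by_cases hz : z = k
    · subst hz
      obtain ⟨x, hx⟩ := hsurj (g z) hfix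
      refine ⟨Quotient.mk _ x, Quotient.sound ?_⟩
      show g.SameCycle (j x) z
      rw [hx]
      exact Equiv.Perm.SameCycle.symm ⟨1, by simp⟩
    · obtain ⟨x, hx⟩ := hsurj z hz
      exact ⟨Quotient.mk _ x, Quotient.sound (show g.SameCycle (j x) z from hx ▸ Equiv.Perm.SameCycle.refl g z)⟩

lemma cc_del_of_fix [Finite α] [Finite β] (g : Perm α) (gg : Perm β) (k : α)
    (j : β → α) (hj : Function.Injective j) (hjk : ∀ x, j x ≠ k)
    (hsurj : ∀ z, z ≠ k → ∃ x, j x = z)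
    (corr : ∀ x y, gg.SameCycle x y ↔ g.SameCycle (j x) (j y))
    (hfix : g k = k) : cycleCount g = cycleCount gg + 1 := by
  rw [cycleCount_def, cycleCount_def]
  have key : Function.Bijective
      (Sum.elim ((Quotient.map' j fun x y (hxy : gg.SameCycle x y) => (corr x y).1 hxy :
          Quotient (ccS gg) → Quotient (ccS g)))
        (fun _ : Unit => Quotient.mk (ccS g) k)) := by
    constructor
    · rintro (q | q) (q' | q') h <;> simp only [Sum.elim_inl, Sum.elim_inr] at h
      · refine congrArg Sum.inl ?_
        induction q using Quotient.ind
        induction q' using Quotient.ind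
        exact Quotient.sound ((corr _ _).2 (Quotient.exact h))
      · exfalso
        induction q using Quotient.ind
        rename_i x
        have : g.SameCycle (j x) k := Quotient.exact h
        exact hjk x (sameCycle_of_fix g hfix this.symm)
      · exfalso
        induction q' using Quotient.ind
        rename_i x
        have : g.SameCycle (j x) k := Quotient.exact h.symm
        exact hjk x (sameCycle_of_fix g hfix this.symm)
      · exact congrArg Sum.inr rfl
    · rintro ⟨z⟩
      by_cases hz : z = k
      · exact ⟨Sum.inr (), by subst hz; rfl⟩
      · obtain ⟨x, hx⟩ := hsurj z hz
        exact ⟨Sum.inl (Quotient.mk _ x), Quotient.sound (show g.SameCycle (j x) z from hx ▸ Equiv.Perm.SameCycle.refl g z)⟩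
  have := Nat.card_eq_of_bijective _ key
  rw [Nat.card_sum, Nat.card_eq_fintype_card (α := Unit), Fintype.card_unit] at this
  omega

open Equiv Equiv.Perm


/-- Delete the point `k` from (a cycle of) `g`, producing a permutation of `Fin n`. -/
def del (k : Fin (n+1)) (g : Perm (Fin (n+1))) : Perm (Fin n) :=
  (finSuccAboveEquiv k).symm.permCongr ((g * Equiv.swap (g⁻¹ k) k).subtypePerm (by
    intro x
    have hk : (g * Equiv.swap (g⁻¹ k) k) k = k := by simp
    constructor
    · intro hx hc
      exact hx (by rw [hc, hk])
    · intro hx hc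
      exact hx ((g * Equiv.swap (g⁻¹ k) k).injective (by rw [hc, hk]))))

lemma emb_del (k : Fin (n+1)) (g : Perm (Fin (n+1))) (x : Fin n) :
    k.succAbove (del k g x) = if g (k.succAbove x) = k then g k else g (k.succAbove x) := by
  have h1 : ∀ s : {x : Fin (n+1) // x ≠ k}, k.succAbove ((finSuccAboveEquiv k).symm s) = s.val := by
    intro s
    conv_rhs => rw [← (finSuccAboveEquiv k).apply_symm_apply s]
    rw [finSuccAboveEquiv_apply]
  rw [del, Equiv.permCongr_apply, Equiv.symm_symm, h1, Equiv.Perm.subtypePerm_apply]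
  show g (Equiv.swap (g⁻¹ k) k (k.succAbove x)) = _
  rcases eq_or_ne (g (k.succAbove x)) k with h | h
  · have h2 : k.succAbove x = g⁻¹ k := by apply g.injective; simp [h]
    rw [if_pos h]
    conv_lhs => rw [h2, Equiv.swap_apply_left]
  · have h2 : k.succAbove x ≠ g⁻¹ k := fun hc => h (by rw [hc]; simp)
    rw [if_neg h, Equiv.swap_apply_of_ne_of_ne h2 (Fin.succAbove_ne k x)]

lemma del_inv (k : Fin (n+1)) (g : Perm (Fin (n+1))) : (del k g)⁻¹ = del k g⁻¹ := by
  refine inv_eq_of_mul_eq_one_right (Equiv.ext fun y => ?_)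
  apply Fin.succAbove_right_injective (p := k)
  rw [Equiv.Perm.mul_apply, Equiv.Perm.one_apply, emb_del, emb_del]
  rcases eq_or_ne (g⁻¹ (k.succAbove y)) k with h | h
  · have h3 : k.succAbove y = g k := by
      have := congrArg g h
      simpa using this
    rw [if_pos h, if_pos (by simp : g (g⁻¹ k) = k), h3]
  · rw [if_neg h]
    have h2 : g (g⁻¹ (k.succAbove y)) = k.succAbove y := by simp
    rw [h2, if_neg (Fin.succAbove_ne k y)]

lemma sameCycle_of_natpow {γ : Type*} {f : Perm γ} {x y : γ} (m : ℕ) (h : (f ^ m) x = y) :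
    f.SameCycle x y := ⟨m, by simpa [zpow_natCast] using h⟩

lemma sameCycle_del (k : Fin (n+1)) (g : Perm (Fin (n+1))) (x y : Fin n) :
    (del k g).SameCycle x y ↔ g.SameCycle (k.succAbove x) (k.succAbove y) := by
  have step : ∀ x : Fin n, g.SameCycle (k.succAbove x) (k.succAbove (del k g x)) := by
    intro x
    rw [emb_del]
    split_ifs with hc
    · exact sameCycle_of_natpow 2 (by rw [pow_succ, pow_one, Equiv.Perm.mul_apply, hc])
    · exact sameCycle_of_natpow 1 (by rw [pow_one])
  constructor
  · intro h
    suffices H : ∀ m : ℕ, ∀ x : Fin n, g.SameCycle (k.succAbove x)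
        (k.succAbove ((del k g ^ m) x)) by
      obtain ⟨i, _, rfl⟩ := h.exists_pow_eq'
      exact H i x
    intro m
    induction m with
    | zero => intro x; simpa using Equiv.Perm.SameCycle.refl _ _
    | succ m ih =>
      intro x
      have hrw : ((del k g) ^ (m+1)) x = ((del k g) ^ m) (del k g x) := by
        rw [pow_succ, Equiv.Perm.mul_apply]
      rw [hrw]
      exact (step x).trans (ih (del k g x))
  · intro h
    suffices H : ∀ i : ℕ, ∀ x y : Fin n, (g ^ i) (k.succAbove x) = k.succAbove y →
        (del k g).SameCycle x y by
      obtain ⟨i, _, hy⟩ := h.exists_pow_eq'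
      exact H i x y hy
    intro i
    induction i using Nat.strong_induction_on with
    | _ i ih =>
      intro x y hy
      match i, hy with
      | 0, hy =>
        have : x = y := Fin.succAbove_right_injective (p := k) (by simpa using hy)
        exact this ▸ Equiv.Perm.SameCycle.refl _ _
      | (m+1), hy =>
        have hstep : (del k g).SameCycle x (del k g x) := sameCycle_of_natpow 1 (by rw [pow_one])
        rcases eq_or_ne (g (k.succAbove x)) k with hc | hc
        · match m, hy with
          | 0, hy =>
            exfalso
            rw [pow_one, hc] at hy
            exact Fin.succAbove_ne k y hy.symm
          | (l+1), hy =>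
            have h4 : k.succAbove (del k g x) = g k := by rw [emb_del, if_pos hc]
            have h5 : (g ^ l) (k.succAbove (del k g x)) = k.succAbove y := by
              rw [h4, ← hy, pow_succ, Equiv.Perm.mul_apply, hc, pow_succ, Equiv.Perm.mul_apply]
            exact hstep.trans (ih l (by omega) _ _ h5)
        · have h4 : k.succAbove (del k g x) = g (k.succAbove x) := by rw [emb_del, if_neg hc]
          have h5 : (g ^ m) (k.succAbove (del k g x)) = k.succAbove y := by
            rw [h4, ← hy, pow_succ, Equiv.Perm.mul_apply]
          exact hstep.trans (ih m (by omega) _ _ h5)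

lemma val_succAbove {k : Fin (n+1)} {x : Fin n} :
    (k.succAbove x : ℕ) = if (x:ℕ) < (k:ℕ) then (x:ℕ) else (x:ℕ) + 1 := by
  rw [Fin.succAbove]
  split_ifs with h1 h2 h2
  · rfl
  · exact absurd (Fin.lt_def.mp h1) (by simpa using h2)
  · exact absurd (Fin.lt_def.mpr (by simpa using h2)) h1
  · rfl

lemma val_rot {m : ℕ} (z : Fin (m+1)) :
    ((finRotate (m+1)) z : ℕ) = if (z:ℕ) = m then 0 else (z:ℕ) + 1 := by
  rw [finRotate_succ_apply, Fin.val_add_one]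
  split_ifs with h1 h2 h2
  · rfl
  · exact absurd (congrArg Fin.val h1) (by simpa using h2)
  · exact absurd (Fin.ext (by simpa using h2) : z = Fin.last m) h1
  · rfl

lemma rot_ne (z : Fin (n+2)) : finRotate (n+2) z ≠ z := by
  intro h
  have := congrArg Fin.val h
  rw [val_rot] at this
  have hz := z.is_lt
  split_ifs at this <;> omega

lemma emb_rot (k : Fin (n+2)) (w : Fin (n+1)) :
    k.succAbove (finRotate (n+1) w) =
      if finRotate (n+2) (k.succAbove w) = k then
        finRotate (n+2) (finRotate (n+2) (k.succAbove w))
      else finRotate (n+2) (k.succAbove w) := by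
  have hk := k.is_lt
  have hw := w.is_lt
  split_ifs with h
  · apply Fin.ext
    have h' := congrArg Fin.val h
    simp only [val_rot, val_succAbove] at h' ⊢
    split_ifs at h' ⊢ <;> (try contradiction) <;> omega
  · apply Fin.ext
    have h' : ((finRotate (n+2)) (k.succAbove w)).val ≠ k.val := fun hc => h (Fin.ext hc)
    simp only [val_rot, val_succAbove] at h' ⊢
    split_ifs at h' ⊢ <;> (try contradiction) <;> omega

lemma del_rot (k : Fin (n+2)) (σ : Perm (Fin (n+2)))
    (H : σ k = k ∨ finRotate (n+2) (σ k) = k) :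
    del k (finRotate (n+2) * σ) = finRotate (n+1) * del k σ := by
  apply Equiv.ext; intro x
  apply Fin.succAbove_right_injective (p := k)
  rw [Equiv.Perm.mul_apply, emb_rot, emb_del, emb_del]
  rw [Equiv.Perm.mul_apply (finRotate (n+2)) σ (k.succAbove x), Equiv.Perm.mul_apply (finRotate (n+2)) σ k]
  rcases eq_or_ne (σ (k.succAbove x)) k with h1 | h1
  · -- σ(Ex) = k : case 3
    have hA : σ k ≠ k := fun hc => Fin.succAbove_ne k x (σ.injective (h1.trans hc.symm))
    have hB : finRotate (n+2) (σ k) = k := H.resolve_left hA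
    rw [if_pos h1, if_neg (by rw [h1]; exact rot_ne k), if_pos hB, h1, hB]
  · rw [if_neg h1]
    rcases eq_or_ne (finRotate (n+2) (σ (k.succAbove x))) k with h2 | h2
    · -- case 2
      have hA : σ k = k := by
        rcases H with hA | hB
        · exact hA
        · exfalso
          exact Fin.succAbove_ne k x (σ.injective ((finRotate (n+2)).injective (h2.trans hB.symm)))
      rw [if_pos h2, if_pos h2, hA, h2]
    · rw [if_neg h2, if_neg h2]

open Equiv Equiv.Perm


lemma isLeast_image {k : Fin (n+1)} {T : Set (Fin n)} {y : Fin n} :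
    IsLeast (k.succAbove '' T) (k.succAbove y) ↔ IsLeast T y := by
  constructor
  · rintro ⟨⟨y', hy', hyy⟩, hlb⟩
    have : y' = y := Fin.succAbove_right_injective hyy
    subst this
    exact ⟨hy', fun t ht => Fin.succAbove_le_succAbove_iff.mp (hlb ⟨t, ht, rfl⟩)⟩
  · rintro ⟨hy, hlb⟩
    exact ⟨⟨y, hy, rfl⟩, by rintro _ ⟨t, ht, rfl⟩
                            exact Fin.succAbove_le_succAbove_iff.mpr (hlb ht)⟩

lemma image_sc (k : Fin (n+1)) (g : Perm (Fin (n+1))) (x : Fin n) :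
    k.succAbove '' {y | (del k g).SameCycle x y} =
      {z | g.SameCycle (k.succAbove x) z ∧ z ≠ k} := by
  ext z
  constructor
  · rintro ⟨y, hy, rfl⟩
    exact ⟨(sameCycle_del k g x y).1 hy, Fin.succAbove_ne k y⟩
  · rintro ⟨hz, hzk⟩
    obtain ⟨y, rfl⟩ := Fin.exists_succAbove_eq hzk
    exact ⟨y, (sameCycle_del k g x y).2 hz, rfl⟩

lemma image_sc_lt (k : Fin (n+1)) (g : Perm (Fin (n+1))) (x : Fin n) :
    k.succAbove '' {y | (del k g).SameCycle x y ∧ x < y} =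
      {z | (g.SameCycle (k.succAbove x) z ∧ z ≠ k) ∧ k.succAbove x < z} := by
  ext z
  constructor
  · rintro ⟨y, ⟨hy, hxy⟩, rfl⟩
    exact ⟨⟨(sameCycle_del k g x y).1 hy, Fin.succAbove_ne k y⟩,
      Fin.succAbove_lt_succAbove_iff.mpr hxy⟩
  · rintro ⟨⟨hz, hzk⟩, hlt⟩
    obtain ⟨y, rfl⟩ := Fin.exists_succAbove_eq hzk
    exact ⟨y, ⟨(sameCycle_del k g x y).2 hz, Fin.succAbove_lt_succAbove_iff.mp hlt⟩, rfl⟩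

lemma hkeyL (k : Fin (n+1)) (g : Perm (Fin (n+1))) (x : Fin n) :
    IsLeast {y | (del k g).SameCycle x y} (del k g x) ↔
      IsLeast {z | g.SameCycle (k.succAbove x) z ∧ z ≠ k} (k.succAbove (del k g x)) := by
  rw [← isLeast_image (k := k), image_sc]

lemma hkeyLlt (k : Fin (n+1)) (g : Perm (Fin (n+1))) (x : Fin n) :
    IsLeast {y | (del k g).SameCycle x y ∧ x < y} (del k g x) ↔
      IsLeast {z | (g.SameCycle (k.succAbove x) z ∧ z ≠ k) ∧ k.succAbove x < z}
        (k.succAbove (del k g x)) := by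
  rw [← isLeast_image (k := k), image_sc_lt]

lemma nc1_down (k : Fin (n+1)) (g : Perm (Fin (n+1)))
    (h1 : ∀ a b c d : Fin (n+1), a < b → b < c → c < d →
      g.SameCycle a c → g.SameCycle b d → g.SameCycle a b) :
    ∀ a b c d : Fin n, a < b → b < c → c < d →
      (del k g).SameCycle a c → (del k g).SameCycle b d → (del k g).SameCycle a b := by
  intro a b c d hab hbc hcd hac hbd
  rw [sameCycle_del] at hac hbd ⊢
  exact h1 _ _ _ _ (Fin.succAbove_lt_succAbove_iff.mpr hab)
    (Fin.succAbove_lt_succAbove_iff.mpr hbc)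
    (Fin.succAbove_lt_succAbove_iff.mpr hcd) hac hbd

lemma ncA (k : Fin (n+1)) (g : Perm (Fin (n+1))) (hk : g k = k) :
    IsNonCrossing g ↔ IsNonCrossing (del k g) := by
  have horb : ∀ z, g.SameCycle k z → z = k := fun z h => sameCycle_of_fix g hk h
  have hne : ∀ x : Fin n, g (k.succAbove x) ≠ k := by
    intro x hc
    exact Fin.succAbove_ne k x (g.injective (hc.trans hk.symm))
  have hED : ∀ x, k.succAbove (del k g x) = g (k.succAbove x) := by
    intro x; rw [emb_del, if_neg (hne x)]
  have hnk : ∀ x : Fin n, ∀ z, g.SameCycle (k.succAbove x) z → z ≠ k := by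
    intro x z h hc
    exact Fin.succAbove_ne k x (horb _ (hc ▸ h).symm)
  have hset : ∀ x : Fin n, {z | g.SameCycle (k.succAbove x) z ∧ z ≠ k} =
      {z | g.SameCycle (k.succAbove x) z} := by
    intro x; ext z
    exact ⟨fun h => h.1, fun h => ⟨h, hnk x z h⟩⟩
  have hsetlt : ∀ x : Fin n,
      {z | (g.SameCycle (k.succAbove x) z ∧ z ≠ k) ∧ k.succAbove x < z} =
      {z | g.SameCycle (k.succAbove x) z ∧ k.succAbove x < z} := by
    intro x; ext z
    exact ⟨fun h => ⟨h.1.1, h.2⟩, fun h => ⟨⟨h.1, hnk x z h.1⟩, h.2⟩⟩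
  have hexiff : ∀ x : Fin n, (∃ y, (del k g).SameCycle x y ∧ x < y) ↔
      (∃ z, g.SameCycle (k.succAbove x) z ∧ k.succAbove x < z) := by
    intro x
    constructor
    · rintro ⟨y, hy, hxy⟩
      exact ⟨k.succAbove y, (sameCycle_del k g x y).1 hy,
        Fin.succAbove_lt_succAbove_iff.mpr hxy⟩
    · rintro ⟨z, hz, hxz⟩
      obtain ⟨y, rfl⟩ := Fin.exists_succAbove_eq (hnk x z hz)
      exact ⟨y, (sameCycle_del k g x y).2 hz, Fin.succAbove_lt_succAbove_iff.mp hxz⟩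
  have key1 : ∀ x : Fin n,
      (IsLeast {y | (del k g).SameCycle x y ∧ x < y} (del k g x) ↔
       IsLeast {z | g.SameCycle (k.succAbove x) z ∧ k.succAbove x < z} (g (k.succAbove x))) := by
    intro x; rw [hkeyLlt, hsetlt, hED]
  have key2 : ∀ x : Fin n,
      (IsLeast {y | (del k g).SameCycle x y} (del k g x) ↔
       IsLeast {z | g.SameCycle (k.succAbove x) z} (g (k.succAbove x))) := by
    intro x; rw [hkeyL, hset, hED]
  constructor
  · rintro ⟨h1, h2⟩
    refine ⟨nc1_down k g h1, fun x => ⟨?_, ?_⟩⟩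
    · intro hex
      exact (key1 x).mpr ((h2 (k.succAbove x)).1 ((hexiff x).mp hex))
    · intro hnex
      exact (key2 x).mpr ((h2 (k.succAbove x)).2 (fun hc => hnex ((hexiff x).mpr hc)))
  · rintro ⟨h1, h2⟩
    constructor
    · intro a b c d hab hbc hcd hac hbd
      rcases eq_or_ne a k with rfl | ha
      · exact absurd (horb _ hac) (ne_of_gt (hab.trans hbc))
      rcases eq_or_ne b k with rfl | hb
      · exact absurd (horb _ hbd) (ne_of_gt (hbc.trans hcd))
      rcases eq_or_ne c k with rfl | hc
      · exact absurd (horb _ hac.symm) (ne_of_lt (hab.trans hbc))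
      rcases eq_or_ne d k with rfl | hd
      · exact absurd (horb _ hbd.symm) (ne_of_lt (hbc.trans hcd))
      obtain ⟨a', rfl⟩ := Fin.exists_succAbove_eq ha
      obtain ⟨b', rfl⟩ := Fin.exists_succAbove_eq hb
      obtain ⟨c', rfl⟩ := Fin.exists_succAbove_eq hc
      obtain ⟨d', rfl⟩ := Fin.exists_succAbove_eq hd
      rw [← sameCycle_del (g := g) (k := k)] at hac hbd ⊢
      exact h1 _ _ _ _ (Fin.succAbove_lt_succAbove_iff.mp hab)
        (Fin.succAbove_lt_succAbove_iff.mp hbc)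
        (Fin.succAbove_lt_succAbove_iff.mp hcd) hac hbd
    · intro z
      rcases eq_or_ne z k with rfl | hz
      · constructor
        · rintro ⟨y, hy, hzy⟩
          exact absurd (horb _ hy) (ne_of_gt hzy)
        · intro _
          constructor
          · show g.SameCycle z (g z)
            exact ⟨1, by simp⟩
          · intro y hy
            rw [horb _ hy, hk]
      · obtain ⟨x, rfl⟩ := Fin.exists_succAbove_eq hz
        constructor
        · intro hex
          exact (key1 x).mp ((h2 x).1 ((hexiff x).mpr hex))
        · intro hnex
          exact (key2 x).mp ((h2 x).2 (fun hc => hnex ((hexiff x).mp hc)))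

lemma ncB (k p : Fin (n+1)) (g : Perm (Fin (n+1))) (hp : g p = k) (hpk : p ≠ k)
    (hadj : (p:ℕ) + 1 = (k:ℕ) ∨ ((p:ℕ) = n ∧ (k:ℕ) = 0)) :
    IsNonCrossing g ↔ IsNonCrossing (del k g) := by
  have vne : ∀ {a b : Fin (n+1)}, a ≠ b → (a:ℕ) ≠ (b:ℕ) := fun h hc => h (Fin.ext hc)
  have hsc_pk : g.SameCycle p k := ⟨1, by simp [hp]⟩
  have hgz_ne : ∀ z : Fin (n+1), z ≠ p → g z ≠ k := by
    intro z hz hc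
    exact hz (g.injective (hc.trans hp.symm))
  have hgk_ne : g k ≠ k := hgz_ne k (Ne.symm hpk)
  have hED : ∀ x : Fin n, k.succAbove x ≠ p →
      k.succAbove (del k g x) = g (k.succAbove x) := by
    intro x hx; rw [emb_del, if_neg (hgz_ne _ hx)]
  have hEDp : ∀ x : Fin n, k.succAbove x = p → k.succAbove (del k g x) = g k := by
    intro x hx; rw [emb_del, if_pos (by rw [hx, hp])]
  have hsc_kgk : g.SameCycle k (g k) := ⟨1, by simp⟩
  have hsc_pgk : g.SameCycle p (g k) := hsc_pk.trans hsc_kgk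
  have hwk : ∀ w : Fin (n+1), p < w → w ≠ k → k < w := by
    intro w h1 h2
    rcases hadj with h | ⟨h3, h4⟩
    · exact Fin.lt_def.mpr (by have := Fin.lt_def.mp h1; have := vne h2; omega)
    · exact absurd (Fin.lt_def.mp h1) (by have := w.is_lt; omega)
  constructor
  · rintro ⟨h1, h2⟩
    refine ⟨nc1_down k g h1, fun x => ⟨?_, ?_⟩⟩
    · -- existence case, downward
      intro hex
      rcases eq_or_ne (k.succAbove x) p with hxp | hxp
      · -- Case II : E x = p
        obtain ⟨y, hy, hxy⟩ := hex
        have hz : g.SameCycle p (k.succAbove y) := by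
          rw [← hxp]; exact (sameCycle_del k g x y).1 hy
        have hpz : p < k.succAbove y := by
          rw [← hxp]; exact Fin.succAbove_lt_succAbove_iff.mpr hxy
        rcases hadj with hL | ⟨hpn, hk0⟩
        · have hkz : k < k.succAbove y := hwk _ hpz (Fin.succAbove_ne k y)
          have HK := (h2 k).1 ⟨k.succAbove y, hsc_pk.symm.trans hz, hkz⟩
          rw [hkeyLlt, hEDp x hxp, hxp]
          constructor
          · exact ⟨⟨hsc_pgk, hgk_ne⟩,
              lt_trans (Fin.lt_def.mpr (by omega)) HK.1.2⟩
          · rintro w ⟨⟨hw1, hw2⟩, hw3⟩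
            exact HK.2 ⟨hsc_pk.symm.trans hw1, hwk _ hw3 hw2⟩
        · exfalso
          have h5 := Fin.lt_def.mp hpz
          have h6 := (k.succAbove y).is_lt
          omega
      · -- Case I : E x ≠ p
        obtain ⟨y, hy, hxy⟩ := hex
        have HL := (h2 (k.succAbove x)).1 ⟨k.succAbove y, (sameCycle_del k g x y).1 hy,
          Fin.succAbove_lt_succAbove_iff.mpr hxy⟩
        rw [hkeyLlt, hED x hxp]
        exact ⟨⟨⟨HL.1.1, hgz_ne _ hxp⟩, HL.1.2⟩, fun w hw => HL.2 ⟨hw.1.1, hw.2⟩⟩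
    · -- no-greater case, downward
      intro hnex
      rcases eq_or_ne (k.succAbove x) p with hxp | hxp
      · -- Case II : E x = p
        rcases hadj with hL | ⟨hpn, hk0⟩
        · have hnex' : ¬ ∃ w, g.SameCycle k w ∧ k < w := by
            rintro ⟨w, hw, hkw⟩
            apply hnex
            have hwk' : w ≠ k := ne_of_gt hkw
            have hpw : p < w := lt_trans (Fin.lt_def.mpr (by omega)) hkw
            obtain ⟨y, hy⟩ := Fin.exists_succAbove_eq hwk'
            exact ⟨y, (sameCycle_del k g x y).2 (by rw [hy, hxp]; exact hsc_pk.trans hw),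
              Fin.succAbove_lt_succAbove_iff.mp (by rw [hy, hxp]; exact hpw)⟩
          have HK := (h2 k).2 hnex'
          rw [hkeyL, hEDp x hxp, hxp]
          exact ⟨⟨hsc_pgk, hgk_ne⟩, fun w hw => HK.2 (hsc_pk.symm.trans hw.1)⟩
        · have HK := (h2 k).1 ⟨p, hsc_pk.symm,
            Fin.lt_def.mpr (by have := vne hpk; omega)⟩
          rw [hkeyL, hEDp x hxp, hxp]
          constructor
          · exact ⟨hsc_pgk, hgk_ne⟩
          · rintro w ⟨hw1, hw2⟩
            exact HK.2 ⟨hsc_pk.symm.trans hw1,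
              Fin.lt_def.mpr (by have := vne hw2; omega)⟩
      · -- Case I : E x ≠ p
        have hnex' : ¬ ∃ w, g.SameCycle (k.succAbove x) w ∧ k.succAbove x < w := by
          rintro ⟨w, hw, huw⟩
          have HL := (h2 (k.succAbove x)).1 ⟨w, hw, huw⟩
          apply hnex
          obtain ⟨y, hy⟩ := Fin.exists_succAbove_eq (hgz_ne _ hxp)
          exact ⟨y, (sameCycle_del k g x y).2 (by rw [hy]; exact HL.1.1),
            Fin.succAbove_lt_succAbove_iff.mp (by rw [hy]; exact HL.1.2)⟩
        have HB := (h2 (k.succAbove x)).2 hnex'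
        rw [hkeyL, hED x hxp]
        exact ⟨⟨⟨1, by simp⟩, hgz_ne _ hxp⟩, fun w hw => HB.2 hw.1⟩
  · rintro ⟨h1, h2⟩
    have base : ∀ a b c d : Fin (n+1), a ≠ k → b ≠ k → c ≠ k → d ≠ k →
        a < b → b < c → c < d → g.SameCycle a c → g.SameCycle b d → g.SameCycle a b := by
      intro a b c d ha hb hc hd hab hbc hcd hac hbd
      obtain ⟨a', rfl⟩ := Fin.exists_succAbove_eq ha
      obtain ⟨b', rfl⟩ := Fin.exists_succAbove_eq hb
      obtain ⟨c', rfl⟩ := Fin.exists_succAbove_eq hc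
      obtain ⟨d', rfl⟩ := Fin.exists_succAbove_eq hd
      rw [← sameCycle_del (k := k) (g := g)] at hac hbd ⊢
      exact h1 _ _ _ _ (Fin.succAbove_lt_succAbove_iff.mp hab)
        (Fin.succAbove_lt_succAbove_iff.mp hbc)
        (Fin.succAbove_lt_succAbove_iff.mp hcd) hac hbd
    constructor
    · intro a b c d hab hbc hcd hac hbd
      rcases eq_or_ne k a with rfl | ha4
      · have hpc : g.SameCycle p c := hsc_pk.trans hac
        rcases hadj with hL | ⟨hpn, hk0⟩
        · have hpb : p < b := lt_trans (Fin.lt_def.mpr (by omega)) hab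
          have hres := base p b c d hpk (ne_of_gt hab) (ne_of_gt (hab.trans hbc))
            (ne_of_gt (hab.trans (hbc.trans hcd))) hpb hbc hcd hpc hbd
          exact hsc_pk.symm.trans hres
        · rcases eq_or_ne p d with rfl | hdp
          · exact (hbd.trans hsc_pk).symm
          · have hdltp : d < p := Fin.lt_def.mpr
              (by have := d.is_lt; have := vne hdp; omega)
            have hcp : g.SameCycle c p := hac.symm.trans hsc_pk.symm
            have hres := base b c d p (ne_of_gt hab) (ne_of_gt (hab.trans hbc))
              (ne_of_gt (hab.trans (hbc.trans hcd))) hpk hbc hcd hdltp hbd hcp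
            exact hac.trans hres.symm
      have ha : a ≠ k := Ne.symm ha4
      rcases eq_or_ne k b with rfl | hb4
      · have hL : (p:ℕ) + 1 = (k:ℕ) := by
          rcases hadj with h | ⟨h3, h4⟩
          · exact h
          · exact absurd (Fin.lt_def.mp hab) (by omega)
        rcases eq_or_ne p a with rfl | hap
        · exact hsc_pk
        · have haltp : a < p := Fin.lt_def.mpr
            (by have := Fin.lt_def.mp hab; have := vne hap; omega)
          have hpltc : p < c := Fin.lt_def.mpr
            (by have := Fin.lt_def.mp hbc; omega)
          have hres := base a p c d (ne_of_lt hab) hpk (ne_of_gt hbc)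
            (ne_of_gt (hbc.trans hcd)) haltp hpltc hcd hac (hsc_pk.trans hbd)
          exact hres.trans hsc_pk
      have hb : b ≠ k := Ne.symm hb4
      rcases eq_or_ne k c with rfl | hc4
      · have hL : (p:ℕ) + 1 = (k:ℕ) := by
          rcases hadj with h | ⟨h3, h4⟩
          · exact h
          · exact absurd (Fin.lt_def.mp (hab.trans hbc)) (by omega)
        rcases eq_or_ne p b with rfl | hbp
        · exact hac.trans hsc_pk.symm
        · have hbltp : b < p := Fin.lt_def.mpr
            (by have := Fin.lt_def.mp hbc; have := vne hbp; omega)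
          have hpltd : p < d := Fin.lt_def.mpr
            (by have := Fin.lt_def.mp hcd; omega)
          exact base a b p d (ne_of_lt (hab.trans hbc)) (ne_of_lt hbc) hpk
            (ne_of_gt hcd) hab hbltp hpltd (hac.trans hsc_pk.symm) hbd
      have hc : c ≠ k := Ne.symm hc4
      rcases eq_or_ne k d with rfl | hd4
      · have hL : (p:ℕ) + 1 = (k:ℕ) := by
          rcases hadj with h | ⟨h3, h4⟩
          · exact h
          · exact absurd (Fin.lt_def.mp (hab.trans (hbc.trans hcd))) (by omega)
        rcases eq_or_ne p c with rfl | hcp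
        · exact hac.trans (hbd.trans hsc_pk.symm).symm
        · have hcltp : c < p := Fin.lt_def.mpr
            (by have := Fin.lt_def.mp hcd; have := vne hcp; omega)
          exact base a b c p (ne_of_lt (hab.trans (hbc.trans hcd)))
            (ne_of_lt (hbc.trans hcd)) (ne_of_lt hcd) hpk hab hbc hcltp hac
            (hbd.trans hsc_pk.symm)
      · exact base a b c d ha hb hc (Ne.symm hd4) hab hbc hcd hac hbd
    · intro z
      rcases eq_or_ne p z with rfl | hzp4
      · -- z = p
        constructor
        · intro hex
          rw [hp]
          rcases hadj with hL | ⟨hpn, hk0⟩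
          · refine ⟨⟨hsc_pk, Fin.lt_def.mpr (by omega)⟩, ?_⟩
            rintro w ⟨hw1, hw2⟩
            exact Fin.le_def.mpr (by have := Fin.lt_def.mp hw2; omega)
          · exfalso
            obtain ⟨y, hy1, hy2⟩ := hex
            have := Fin.lt_def.mp hy2
            have := y.is_lt
            omega
        · intro hnex
          rw [hp]
          rcases hadj with hL | ⟨hpn, hk0⟩
          · exact absurd ⟨k, hsc_pk, Fin.lt_def.mpr (by omega)⟩ hnex
          · exact ⟨hsc_pk, fun w _ => Fin.le_def.mpr (by omega)⟩
      have hzp : z ≠ p := Ne.symm hzp4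
      rcases eq_or_ne k z with rfl | hzk4
      · -- z = k
        obtain ⟨xp, hxp⟩ := Fin.exists_succAbove_eq hpk
        have hEDxp : k.succAbove (del k g xp) = g k := hEDp xp hxp
        constructor
        · intro hex
          rcases hadj with hL | ⟨hpn, hk0⟩
          · obtain ⟨w, hw, hkw⟩ := hex
            have hwp : p < w := lt_trans (Fin.lt_def.mpr (by omega)) hkw
            have hexD : ∃ y, (del k g).SameCycle xp y ∧ xp < y := by
              obtain ⟨y, hy⟩ := Fin.exists_succAbove_eq (ne_of_gt hkw)
              exact ⟨y, (sameCycle_del k g xp y).2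
                  (by rw [hy, hxp]; exact hsc_pk.trans hw),
                Fin.succAbove_lt_succAbove_iff.mp (by rw [hy, hxp]; exact hwp)⟩
            have HD := (hkeyLlt k g xp).mp ((h2 xp).1 hexD)
            rw [hEDxp, hxp] at HD
            constructor
            · exact ⟨hsc_kgk, hwk _ HD.1.2 HD.1.1.2⟩
            · rintro w' ⟨hw1, hw2⟩
              exact HD.2 ⟨⟨hsc_pk.trans hw1, ne_of_gt hw2⟩,
                lt_trans (Fin.lt_def.mpr (by omega)) hw2⟩
          · have hnexD : ¬ ∃ y, (del k g).SameCycle xp y ∧ xp < y := by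
              rintro ⟨y, _, hy2⟩
              have h3 : p < k.succAbove y := by
                rw [← hxp]; exact Fin.succAbove_lt_succAbove_iff.mpr hy2
              have := Fin.lt_def.mp h3
              have := (k.succAbove y).is_lt
              omega
            have HD := (hkeyL k g xp).mp ((h2 xp).2 hnexD)
            rw [hEDxp, hxp] at HD
            constructor
            · exact ⟨hsc_kgk, Fin.lt_def.mpr (by have := vne hgk_ne; omega)⟩
            · rintro w ⟨hw1, hw2⟩
              exact HD.2 ⟨hsc_pk.trans hw1, ne_of_gt hw2⟩
        · intro hnex
          rcases hadj with hL | ⟨hpn, hk0⟩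
          · have hnexD : ¬ ∃ y, (del k g).SameCycle xp y ∧ xp < y := by
              rintro ⟨y, hy1, hy2⟩
              apply hnex
              have h3 : g.SameCycle p (k.succAbove y) := by
                rw [← hxp]; exact (sameCycle_del k g xp y).1 hy1
              have h4 : p < k.succAbove y := by
                rw [← hxp]; exact Fin.succAbove_lt_succAbove_iff.mpr hy2
              exact ⟨k.succAbove y, hsc_pk.symm.trans h3,
                hwk _ h4 (Fin.succAbove_ne k y)⟩
            have HD := (hkeyL k g xp).mp ((h2 xp).2 hnexD)
            rw [hEDxp, hxp] at HD
            refine ⟨hsc_kgk, ?_⟩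
            intro w hw1
            rcases eq_or_ne k w with rfl | hwk'
            · exact le_trans (HD.2 ⟨Equiv.Perm.SameCycle.refl g p, hpk⟩)
                (Fin.le_def.mpr (by omega))
            · exact HD.2 ⟨hsc_pk.trans hw1, Ne.symm hwk'⟩
          · exact absurd ⟨p, hsc_pk.symm,
              Fin.lt_def.mpr (by have := vne hpk; omega)⟩ hnex
      · -- z ≠ p, z ≠ k
        have hzk : z ≠ k := Ne.symm hzk4
        obtain ⟨x, rfl⟩ := Fin.exists_succAbove_eq hzk
        have hEDx : k.succAbove (del k g x) = g (k.succAbove x) := hED x hzp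
        constructor
        · intro hex
          by_cases hM : ∃ w, (g.SameCycle (k.succAbove x) w ∧ w ≠ k) ∧ k.succAbove x < w
          · have hexD : ∃ y, (del k g).SameCycle x y ∧ x < y := by
              obtain ⟨w, ⟨hw1, hw2⟩, hw3⟩ := hM
              obtain ⟨y, hy⟩ := Fin.exists_succAbove_eq hw2
              exact ⟨y, (sameCycle_del k g x y).2 (by rw [hy]; exact hw1),
                Fin.succAbove_lt_succAbove_iff.mp (by rw [hy]; exact hw3)⟩
            have HD := (hkeyLlt k g x).mp ((h2 x).1 hexD)
            rw [hEDx] at HD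
            refine ⟨⟨HD.1.1.1, HD.1.2⟩, ?_⟩
            rintro w ⟨hw1, hw2⟩
            rcases eq_or_ne k w with rfl | hwne4
            · have hL : (p:ℕ) + 1 = (k:ℕ) := by
                rcases hadj with h | ⟨h3, h4⟩
                · exact h
                · exact absurd (Fin.lt_def.mp hw2) (by omega)
              have hzp' : k.succAbove x < p := Fin.lt_def.mpr
                (by have := Fin.lt_def.mp hw2; have := vne hzp; omega)
              exact le_trans (HD.2 ⟨⟨hw1.trans hsc_pk.symm, hpk⟩, hzp'⟩)
                (Fin.le_def.mpr (by omega))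
            · exact HD.2 ⟨⟨hw1, Ne.symm hwne4⟩, hw2⟩
          · exfalso
            obtain ⟨w, hw1, hw2⟩ := hex
            have hwk2 : k = w := by
              by_contra hc
              exact hM ⟨w, ⟨hw1, fun h => hc h.symm⟩, hw2⟩
            subst hwk2
            have hL : (p:ℕ) + 1 = (k:ℕ) := by
              rcases hadj with h | ⟨h3, h4⟩
              · exact h
              · exact absurd (Fin.lt_def.mp hw2) (by omega)
            have hzp' : k.succAbove x < p := Fin.lt_def.mpr
              (by have := Fin.lt_def.mp hw2; have := vne hzp; omega)
            exact hM ⟨p, ⟨hw1.trans hsc_pk.symm, hpk⟩, hzp'⟩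
        · intro hnex
          have hnexD : ¬ ∃ y, (del k g).SameCycle x y ∧ x < y := by
            rintro ⟨y, hy1, hy2⟩
            exact hnex ⟨k.succAbove y, (sameCycle_del k g x y).1 hy1,
              Fin.succAbove_lt_succAbove_iff.mpr hy2⟩
          have HD := (hkeyL k g x).mp ((h2 x).2 hnexD)
          rw [hEDx] at HD
          refine ⟨HD.1.1, ?_⟩
          intro w hw1
          rcases eq_or_ne k w with rfl | hwne
          · rcases lt_or_gt_of_ne hzk with hlt | hgt
            · exact absurd ⟨k, hw1, hlt⟩ hnex
            · rcases hadj with hL | ⟨hpn, hk0⟩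
              · exact le_trans (HD.2 ⟨hw1.trans hsc_pk.symm, hpk⟩)
                  (Fin.le_def.mpr (by omega))
              · have hzltp : k.succAbove x < p := Fin.lt_def.mpr
                  (by have := (k.succAbove x).is_lt; have := vne hzp; omega)
                exact absurd ⟨p, hw1.trans hsc_pk.symm, hzltp⟩ hnex
          · exact HD.2 ⟨hw1, Ne.symm hwne⟩


variable {n : ℕ}

lemma nc_exists (g : Perm (Fin (n+1))) (hNC : IsNonCrossing g) :
    (∃ k, g k = k) ∨ (∃ k, g k = finRotate (n+1) k) := by
  classical
  by_cases hfix : ∃ k, g k = k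
  · exact Or.inl hfix
  push_neg at hfix
  right
  have h0 : (0 : Fin (n+1)) < g 0 := Fin.pos_of_ne_zero (hfix 0)
  set S : Finset (Fin (n+1)) := Finset.univ.filter (fun x => x < g x) with hS
  have h0S : (0 : Fin (n+1)) ∈ S := by simp [hS, h0]
  obtain ⟨k₀, hk₀S, hmin⟩ := S.exists_min_image (fun x => (g x : ℕ) - (x : ℕ)) ⟨0, h0S⟩
  have hk₀ : k₀ < g k₀ := by simpa [hS] using hk₀S
  refine ⟨k₀, ?_⟩
  by_contra hne
  have hv : (k₀ : ℕ) + 1 < ((g k₀) : ℕ) := by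
    have h1 := Fin.lt_def.mp hk₀
    have h2 := (g k₀).is_lt
    rcases Nat.lt_or_ge ((k₀:ℕ)+1) ((g k₀ : ℕ)) with h | h
    · exact h
    · exfalso
      apply hne
      apply Fin.ext
      rw [val_rot]
      have h3 : ((g k₀):ℕ) = (k₀:ℕ) + 1 := by omega
      rw [h3]
      split_ifs with h4 <;> omega
  set m : Fin (n+1) := ⟨(k₀:ℕ)+1, by have := (g k₀).is_lt; omega⟩ with hm
  have hk₀m : k₀ < m := Fin.lt_def.mpr (by simp [hm])
  have hmgk₀ : m < g k₀ := Fin.lt_def.mpr (by simp [hm]; omega)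
  have hscc : g.SameCycle k₀ (g k₀) := ⟨1, by simp⟩
  have SL := (hNC.2 k₀).1 ⟨g k₀, hscc, hk₀⟩
  have hmorb : ¬ g.SameCycle k₀ m := by
    intro hc
    have := SL.2 ⟨hc, hk₀m⟩
    exact absurd (lt_of_le_of_lt this hmgk₀) (lt_irrefl _)
  have horbm : ∀ y, g.SameCycle m y → k₀ < y ∧ y < g k₀ := by
    intro y hy
    have hyk₀ : y ≠ k₀ := fun hc => hmorb ((hc ▸ hy).symm)
    have hygk₀ : y ≠ g k₀ := fun hc => hmorb (hscc.trans (hc ▸ hy).symm)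
    rcases Nat.lt_or_ge ((g k₀ : ℕ)) ((y : ℕ)) with h | h
    · exfalso
      exact hmorb (hNC.1 k₀ m (g k₀) y hk₀m hmgk₀ (Fin.lt_def.mpr h) hscc hy)
    rcases Nat.lt_or_ge ((y : ℕ)) ((k₀ : ℕ)) with h' | h'
    · exfalso
      have := hNC.1 y k₀ m (g k₀) (Fin.lt_def.mpr h') hk₀m hmgk₀ hy.symm hscc
      exact hmorb (this.symm.trans hy.symm)
    · constructor
      · exact Fin.lt_def.mpr (by
          have h9 : (y:ℕ) ≠ (k₀:ℕ) := fun hc => hyk₀ (Fin.ext hc)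
          omega)
      · exact Fin.lt_def.mpr (by
          have h9 : (y:ℕ) ≠ ((g k₀ : Fin (n+1)):ℕ) := fun hc => hygk₀ (Fin.ext hc)
          omega)
  set T : Finset (Fin (n+1)) := Finset.univ.filter (fun y => g.SameCycle m y) with hT
  have hmT : m ∈ T := by
    simp only [hT, Finset.mem_filter, Finset.mem_univ, true_and]
    exact Equiv.Perm.SameCycle.refl g m
  set m' := T.min' ⟨m, hmT⟩ with hm'
  have hm'T : m' ∈ T := T.min'_mem _
  have hscmm' : g.SameCycle m m' := by
    simpa only [hT, Finset.mem_filter, Finset.mem_univ, true_and] using hm'T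
  have hgm'T : g m' ∈ T := by
    simp only [hT, Finset.mem_filter, Finset.mem_univ, true_and]
    exact hscmm'.trans ⟨1, by simp⟩
  have hm'lt : m' < g m' := lt_of_le_of_ne (T.min'_le _ hgm'T) (Ne.symm (hfix m'))
  have hm'S : m' ∈ S := by simp [hS, hm'lt]
  have hb1 := horbm m' hscmm'
  have hb2 := horbm (g m') (hscmm'.trans ⟨1, by simp⟩)
  have hmm := hmin m' hm'S
  have c1 := Fin.lt_def.mp hb1.1
  have c2 := Fin.lt_def.mp hb2.2
  have c3 := Fin.lt_def.mp hm'lt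
  have c4 := Fin.lt_def.mp hk₀
  omega

lemma main : ∀ (n : ℕ) (g : Perm (Fin (n+1))),
    (cycleCount g + cycleCount (finRotate (n+1) * g⁻¹) = (n+1) + 1 ↔ IsNonCrossing g) := by
  intro n
  induction n with
  | zero =>
    intro g
    have helem : ∀ a b : Fin (0+1), a = b := fun a b => Fin.ext (by omega)
    have hcc : ∀ f : Perm (Fin (0+1)), cycleCount f = 1 := by
      intro f
      rw [cycleCount_def]
      have hsub : Subsingleton (Quotient (ccS f)) := ⟨by
        rintro ⟨a⟩ ⟨b⟩
        exact Quotient.sound (show f.SameCycle a b from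
          (helem a b) ▸ Equiv.Perm.SameCycle.refl f a)⟩
      have hne : Nonempty (Quotient (ccS f)) := ⟨Quotient.mk _ 0⟩
      rw [Nat.card_eq_one_iff_unique]
      exact ⟨hsub, hne⟩
    refine iff_of_true (by rw [hcc, hcc]) ⟨?_, ?_⟩
    · intro a b c d hab _ _ _ _
      exact absurd hab (by rw [helem a b]; exact lt_irrefl b)
    · intro x
      constructor
      · rintro ⟨y, _, hxy⟩
        exact absurd hxy (by rw [helem x y]; exact lt_irrefl y)
      · intro _
        exact ⟨⟨1, by simp⟩, fun y _ => le_of_eq (helem _ _)⟩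
  | succ n IH =>
    intro g
    by_cases hA : ∃ k, g k = k
    · obtain ⟨k, hk⟩ := hA
      have hkinv : g⁻¹ k = k := (Equiv.Perm.inv_eq_iff_eq).mpr hk.symm
      have e1 : cycleCount g = cycleCount (del k g) + 1 :=
        cc_del_of_fix g (del k g) k k.succAbove Fin.succAbove_right_injective
          (Fin.succAbove_ne k) (fun z hz => Fin.exists_succAbove_eq hz)
          (sameCycle_del k g) hk
      have hfixh : (finRotate (n+2) * g⁻¹) k ≠ k := by
        rw [Equiv.Perm.mul_apply, hkinv]
        exact rot_ne k
      have e2 : cycleCount (finRotate (n+2) * g⁻¹)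
          = cycleCount (del k (finRotate (n+2) * g⁻¹)) :=
        cc_del_of_nfix _ _ k k.succAbove Fin.succAbove_right_injective
          (fun z hz => Fin.exists_succAbove_eq hz) (sameCycle_del k _) hfixh
      have hh : del k (finRotate (n+2) * g⁻¹) = finRotate (n+1) * (del k g)⁻¹ := by
        rw [del_inv]
        exact del_rot k g⁻¹ (Or.inl hkinv)
      rw [e1, e2, hh, ncA k g hk, ← IH (del k g)]
      omega
    · by_cases hB : ∃ k, (finRotate (n+2) * g⁻¹) k = k
      · obtain ⟨k, hk⟩ := hB
        push_neg at hA
        have hp : g (g⁻¹ k) = k := by simp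
        have hτp : finRotate (n+2) (g⁻¹ k) = k := by
          simpa [Equiv.Perm.mul_apply] using hk
        have hpk : g⁻¹ k ≠ k := by
          intro hc
          rw [hc] at hτp
          exact rot_ne k hτp
        have hadj : ((g⁻¹ k : Fin (n+2)):ℕ) + 1 = (k:ℕ) ∨
            (((g⁻¹ k : Fin (n+2)):ℕ) = n+1 ∧ (k:ℕ) = 0) := by
          have h5 := congrArg Fin.val hτp
          rw [val_rot] at h5
          split_ifs at h5 with h
          · exact Or.inr ⟨h, h5.symm⟩
          · exact Or.inl h5
        have e1 : cycleCount g = cycleCount (del k g) :=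
          cc_del_of_nfix g (del k g) k k.succAbove Fin.succAbove_right_injective
            (fun z hz => Fin.exists_succAbove_eq hz) (sameCycle_del k g) (hA k)
        have e2 : cycleCount (finRotate (n+2) * g⁻¹)
            = cycleCount (del k (finRotate (n+2) * g⁻¹)) + 1 :=
          cc_del_of_fix _ _ k k.succAbove Fin.succAbove_right_injective
            (Fin.succAbove_ne k) (fun z hz => Fin.exists_succAbove_eq hz)
            (sameCycle_del k _) hk
        have hh : del k (finRotate (n+2) * g⁻¹) = finRotate (n+1) * (del k g)⁻¹ := by
          rw [del_inv]
          exact del_rot k g⁻¹ (Or.inr hτp)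
        rw [e1, e2, hh, ncB k (g⁻¹ k) g hp hpk hadj, ← IH (del k g)]
        omega
      · push_neg at hA
        push_neg at hB
        refine iff_of_false ?_ ?_
        · intro hc
          have b1 := two_mul_cycleCount_le g (fun x => hA x)
          have b2' := two_mul_cycleCount_le (finRotate (n+2) * g⁻¹) (fun x => hB x)
          rw [Nat.card_eq_fintype_card, Fintype.card_fin] at b1 b2'
          have b2 : 2 * cycleCount (finRotate (n+1+1) * g⁻¹) ≤ n + 2 := b2'
          omega
        · intro hNC
          rcases nc_exists g hNC with ⟨k, hk⟩ | ⟨k, hk⟩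
          · exact hA k hk
          · apply hB (finRotate (n+2) k)
            rw [Equiv.Perm.mul_apply,
              (Equiv.Perm.inv_eq_iff_eq).mpr hk.symm]

end Biane

/-- Biane's theorem: `g` lies on the Cayley geodesic between the identity and the
full cycle `τ = finRotate N` iff `g` is a non-crossing permutation. -/
theorem stmt2 (N : ℕ) (hN : 1 ≤ N) (g : Equiv.Perm (Fin N)) :
    (cycleCount g + cycleCount (finRotate N * g⁻¹) = N + 1 ↔ IsNonCrossing g) ∧
    (cayley 1 g + cayley g (finRotate N) = N - 1 ↔ IsNonCrossing g) := by
  obtain ⟨n, rfl⟩ : ∃ n, N = n + 1 := ⟨N - 1, by omega⟩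
  have part1 := Biane.main n g
  refine ⟨part1, ?_⟩
  have hb1 : 1 ≤ cycleCount g := Biane.cycleCount_pos g
  have hb2 : cycleCount g ≤ n + 1 := by
    have := Biane.cycleCount_le_card g
    rwa [Nat.card_eq_fintype_card, Fintype.card_fin] at this
  have hb3 : 1 ≤ cycleCount (finRotate (n+1) * g⁻¹) := Biane.cycleCount_pos _
  have hb4 : cycleCount (finRotate (n+1) * g⁻¹) ≤ n + 1 := by
    have := Biane.cycleCount_le_card (finRotate (n+1) * g⁻¹)
    rwa [Nat.card_eq_fintype_card, Fintype.card_fin] at this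
  have e3 : cayley 1 g = (n+1) - cycleCount g := by
    rw [cayley, Nat.card_eq_fintype_card, Fintype.card_fin, one_mul, Biane.cycleCount_inv]
  have e4 : cayley g (finRotate (n+1)) = (n+1) - cycleCount (finRotate (n+1) * g⁻¹) := by
    rw [cayley, Nat.card_eq_fintype_card, Fintype.card_fin]
    congr 1
    have h6 : g * (finRotate (n+1))⁻¹ = (finRotate (n+1) * g⁻¹)⁻¹ := by
      rw [mul_inv_rev, inv_inv]
    rw [h6, Biane.cycleCount_inv]
  rw [e3, e4, ← part1]
  omega
end

section
/- For any permutations g and g₀ of a finite set of cardinality N, one has N − #(g) ≥ #(g₀) − #⟨g,g₀⟩, where #⟨g,g₀⟩ denotes the number of orbits of the subgroup generated by g and g₀. Equivalently, d(g,e) ≥ #(g₀) − #⟨g,g₀⟩. -/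
/-- The number of orbits of the subgroup generated by two permutations `g, h`. -/
noncomputable def jointOrbitCount {α : Type*} (g h : Equiv.Perm α) : ℕ :=
  Nat.card (MulAction.orbitRel.Quotient (Subgroup.closure ({g, h} : Set (Equiv.Perm α))) α)

namespace Stmt5Aux

open Equiv Function

variable {α : Type*}

/-- The setoid of the `SameCycle` relation. -/
def scSetoid (g : Equiv.Perm α) : Setoid α :=
  Setoid.mk g.SameCycle
    ⟨fun x => Equiv.Perm.SameCycle.refl g x,
     fun h => h.symm,
     fun h₁ h₂ => h₁.trans h₂⟩

lemma cycleCount_eq (g : Equiv.Perm α) :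
    cycleCount g = Nat.card (Quotient (scSetoid g)) := rfl

lemma jointOrbitCount_eq (g h : Equiv.Perm α) : jointOrbitCount g h =
    Nat.card (Quotient (MulAction.orbitRel
      (Subgroup.closure ({g, h} : Set (Equiv.Perm α))) α)) := rfl

lemma card_quot_le [Finite α] {r s : Setoid α} (h : ∀ x y, r.r x y → s.r x y) :
    Nat.card (Quotient s) ≤ Nat.card (Quotient r) :=
  Nat.card_le_card_of_surjective (Quotient.map' id fun x y hxy => h x y hxy)
    (fun c => Quotient.inductionOn' c fun x => ⟨Quotient.mk'' x, rfl⟩)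

lemma card_lt {γ δ : Type*} [Finite γ] (f : γ → δ) (hs : Surjective f) {x y : γ}
    (hxy : x ≠ y) (hf : f x = f y) : Nat.card δ < Nat.card γ := by
  classical
  have : Finite δ := Finite.of_surjective f hs
  cases nonempty_fintype γ
  cases nonempty_fintype δ
  rw [Nat.card_eq_fintype_card, Nat.card_eq_fintype_card]
  exact Fintype.card_lt_of_surjective_not_injective f hs fun hi => hxy (hi hf)

/-- The setoid obtained from `t` by merging the classes of `a` and `b`. -/
def mergeS (t : Setoid α) (a b : α) : Setoid α where
  r x y := t.r x y ∨ (t.r x a ∧ t.r b y) ∨ (t.r x b ∧ t.r a y)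
  iseqv := by
    constructor
    · intro x; exact Or.inl (t.refl x)
    · rintro x y (h | ⟨h1, h2⟩ | ⟨h1, h2⟩)
      · exact Or.inl (t.symm h)
      · exact Or.inr (Or.inr ⟨t.symm h2, t.symm h1⟩)
      · exact Or.inr (Or.inl ⟨t.symm h2, t.symm h1⟩)
    · rintro x y z (h | ⟨h1, h2⟩ | ⟨h1, h2⟩) (h' | ⟨h1', h2'⟩ | ⟨h1', h2'⟩)
      · exact Or.inl (t.trans h h')
      · exact Or.inr (Or.inl ⟨t.trans h h1', h2'⟩)
      · exact Or.inr (Or.inr ⟨t.trans h h1', h2'⟩)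
      · exact Or.inr (Or.inl ⟨h1, t.trans h2 h'⟩)
      · exact Or.inl (t.trans h1 (t.trans (t.symm (t.trans h2 h1')) h2'))
      · exact Or.inl (t.trans h1 h2')
      · exact Or.inr (Or.inr ⟨h1, t.trans h2 h'⟩)
      · exact Or.inl (t.trans h1 h2')
      · exact Or.inl (t.trans h1 (t.trans (t.symm (t.trans h2 h1')) h2'))

lemma mergeS_r {t : Setoid α} {a b x y : α} :
    (mergeS t a b).r x y ↔ t.r x y ∨ (t.r x a ∧ t.r b y) ∨ (t.r x b ∧ t.r a y) := Iff.rfl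

lemma card_merge [Finite α] (t : Setoid α) (a b : α) :
    Nat.card (Quotient t) ≤ Nat.card (Quotient (mergeS t a b)) + 1 := by
  classical
  have h1 : Nat.card (Quotient t) ≤
      Nat.card {c : Quotient t // c ≠ Quotient.mk'' a} + 1 := by
    have hinj : Nat.card (Quotient t) ≤
        Nat.card (Option {c : Quotient t // c ≠ Quotient.mk'' a}) := by
      haveI : Finite (Quotient t) :=
        Finite.of_surjective (Quotient.mk'' : α → Quotient t)
          (fun c => Quotient.inductionOn' c fun x => ⟨x, rfl⟩)
      letI := Fintype.ofFinite (Quotient t)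
      letI : DecidableEq (Quotient t) := Classical.decEq _
      letI := Fintype.ofFinite {c : Quotient t // c ≠ (Quotient.mk'' a : Quotient t)}
      apply Nat.card_le_card_of_injective
        (fun c => if h : c = Quotient.mk'' a then none else some ⟨c, h⟩)
      intro c d hcd
      dsimp only at hcd
      by_cases hc : c = Quotient.mk'' a
      · by_cases hd : d = Quotient.mk'' a
        · exact hc.trans hd.symm
        · rw [dif_pos hc, dif_neg hd] at hcd; exact absurd hcd (by simp)
      · by_cases hd : d = Quotient.mk'' a
        · rw [dif_neg hc, dif_pos hd] at hcd; exact absurd hcd (by simp)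
        · rw [dif_neg hc, dif_neg hd] at hcd
          exact congrArg Subtype.val (Option.some_injective _ hcd)
    have ho : Nat.card (Option {c : Quotient t // c ≠ Quotient.mk'' a}) =
        Nat.card {c : Quotient t // c ≠ Quotient.mk'' a} + 1 := by
      letI := Fintype.ofFinite {c : Quotient t // c ≠ (Quotient.mk'' a : Quotient t)}
      simp [Nat.card_eq_fintype_card]
    omega
  have h2 : Nat.card {c : Quotient t // c ≠ Quotient.mk'' a} ≤
      Nat.card (Quotient (mergeS t a b)) := by
    have key : ∀ (c d : Quotient t), c ≠ Quotient.mk'' a → d ≠ Quotient.mk'' a →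
        Quotient.map' (s₂ := mergeS t a b) id (fun x y hxy => Or.inl hxy) c =
        Quotient.map' id (fun x y hxy => Or.inl hxy) d → c = d := by
      intro c d
      induction c using Quotient.inductionOn' with | h x => ?_
      induction d using Quotient.inductionOn' with | h y => ?_
      intro hc hd h
      change (Quotient.mk'' x : Quotient (mergeS t a b)) = Quotient.mk'' y at h
      have hxy : (mergeS t a b).r x y := Quotient.eq''.mp h
      have hxa : ¬ t.r x a := fun hxa => hc (Quotient.sound' hxa)
      have hya : ¬ t.r y a := fun hya => hd (Quotient.sound' hya)
      rcases hxy with h' | ⟨h1', h2'⟩ | ⟨h1', h2'⟩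
      · exact Quotient.sound' h'
      · exact absurd h1' hxa
      · exact absurd (t.symm h2') hya
    exact Nat.card_le_card_of_injective
      (fun c => Quotient.map' (s₂ := mergeS t a b) id (fun x y hxy => Or.inl hxy) c.1)
      (fun c d h => Subtype.ext (key c.1 d.1 c.2 d.2 h))
  omega

lemma sameCycle_of_step [Finite α] {f g : Equiv.Perm α}
    (h : ∀ z, g.SameCycle z (f z)) : ∀ x y, f.SameCycle x y → g.SameCycle x y := by
  classical
  cases nonempty_fintype α
  have key : ∀ (n : ℕ) (x : α), g.SameCycle x ((f ^ n) x) := by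
    intro n
    induction n with
    | zero => intro x; simpa using Equiv.Perm.SameCycle.refl g x
    | succ n ih =>
      intro x
      have e : (f ^ (n + 1)) x = (f ^ n) (f x) := by
        rw [pow_succ]; rfl
      rw [e]
      exact (h x).trans (ih (f x))
  intro x y hxy
  obtain ⟨i, -, -, hi⟩ := Equiv.Perm.SameCycle.exists_pow_eq f hxy
  exact hi ▸ key i x

lemma orbitRel_of_mem {S : Set (Equiv.Perm α)} {w : Equiv.Perm α}
    (hw : w ∈ Subgroup.closure S) (z : α) :
    (MulAction.orbitRel (Subgroup.closure S) α).r (w z) z := by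
  rw [MulAction.orbitRel_apply]
  exact MulAction.mem_orbit_iff.mpr ⟨⟨w, hw⟩, rfl⟩

lemma closure_pair_le {g g₀ : Equiv.Perm α} (s : Setoid α)
    (hg : ∀ z, s.r z (g z)) (hg₀ : ∀ z, s.r z (g₀ z)) :
    ∀ x y, (MulAction.orbitRel (Subgroup.closure ({g, g₀} : Set (Equiv.Perm α))) α).r x y →
      s.r x y := by
  have key : ∀ w, w ∈ Subgroup.closure ({g, g₀} : Set (Equiv.Perm α)) →
      ∀ z, s.r z (w z) := by
    intro w hw
    induction hw using Subgroup.closure_induction with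
    | mem x hx =>
      rcases hx with rfl | hx
      · exact hg
      · rw [Set.mem_singleton_iff] at hx; subst hx; exact hg₀
    | one => intro z; simpa using s.refl z
    | mul x y hx hy ihx ihy =>
      intro z
      have := s.trans (ihy z) (ihx (y z))
      simpa [Equiv.Perm.mul_apply] using this
    | inv x hx ihx =>
      intro z
      have := ihx (x⁻¹ z)
      rw [← Equiv.Perm.mul_apply, mul_inv_cancel, Equiv.Perm.one_apply] at this
      exact s.symm this
  intro x y hxy
  rw [MulAction.orbitRel_apply, MulAction.mem_orbit_iff] at hxy
  obtain ⟨⟨w, hw⟩, hwz⟩ := hxy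
  have h := key w hw y
  have hwz' : w y = x := hwz
  exact s.symm (hwz' ▸ h)

lemma cycleCount_one [Finite α] : cycleCount (1 : Equiv.Perm α) = Nat.card α := by
  have hb : Function.Bijective (Quotient.mk'' : α → Quotient (scSetoid (1 : Equiv.Perm α))) := by
    constructor
    · intro x y h
      exact Equiv.Perm.sameCycle_one.mp (Quotient.eq''.mp h)
    · intro c; exact Quotient.inductionOn' c fun x => ⟨x, rfl⟩
  rw [cycleCount_eq]
  exact (Nat.card_congr (Equiv.ofBijective _ hb)).symm

lemma base_case [Finite α] (g₀ : Equiv.Perm α) :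
    cycleCount g₀ ≤ (Nat.card α - cycleCount (1 : Equiv.Perm α)) + jointOrbitCount 1 g₀ := by
  have h : cycleCount g₀ ≤ jointOrbitCount 1 g₀ := by
    rw [cycleCount_eq, jointOrbitCount_eq]
    exact card_quot_le (closure_pair_le (scSetoid g₀)
      (fun z => by simpa using Equiv.Perm.SameCycle.refl g₀ z)
      (fun z => ⟨1, by simp⟩))
  omega

theorem aux [Finite α] : ∀ (k : ℕ) (g g₀ : Equiv.Perm α),
    ({x | g x ≠ x} : Set α).ncard ≤ k →
    cycleCount g₀ ≤ (Nat.card α - cycleCount g) + jointOrbitCount g g₀ := by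
  intro k
  induction k with
  | zero =>
    intro g g₀ hk
    have hempty : ({x | g x ≠ x} : Set α) = ∅ :=
      (Set.ncard_eq_zero (Set.toFinite _)).mp (Nat.le_zero.mp hk)
    have hg : g = 1 := by
      ext x
      have := Set.eq_empty_iff_forall_notMem.mp hempty x
      simpa using this
    subst hg
    exact base_case g₀
  | succ k ih =>
    intro g g₀ hk
    classical
    by_cases hg1 : g = 1
    · subst hg1; exact base_case g₀
    obtain ⟨a, hga⟩ : ∃ a, g a ≠ a := by
      by_contra h; push_neg at h; exact hg1 (Equiv.ext h)
    set g' : Equiv.Perm α := Equiv.swap a (g a) * g with hg'def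
    have hfix : g' a = a := by
      simp [hg'def, Equiv.Perm.mul_apply, Equiv.swap_apply_right]
    have hgg : g = Equiv.swap a (g a) * g' := by
      rw [hg'def, ← mul_assoc, Equiv.swap_mul_self, one_mul]
    -- the support strictly decreases
    have hsub : ({x | g' x ≠ x} : Set α) ⊆ {x | g x ≠ x} := by
      intro x hx
      simp only [Set.mem_setOf_eq] at hx ⊢
      intro hgx
      apply hx
      have hxa : x ≠ a := fun h => hga (h ▸ hgx)
      have hxga : x ≠ g a := by
        intro h
        apply hga
        have : g (g a) = g a := h ▸ hgx
        exact g.injective this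
      rw [hg'def, Equiv.Perm.mul_apply, hgx, Equiv.swap_apply_of_ne_of_ne hxa hxga]
    have hmlt : ({x | g' x ≠ x} : Set α).ncard < ({x | g x ≠ x} : Set α).ncard := by
      apply Set.ncard_lt_ncard
      · rw [Set.ssubset_iff_of_subset hsub]
        exact ⟨a, hga, by simp [hfix]⟩
      · exact Set.toFinite _
    -- cycle refinement : each same-cycle class of g' lies in one of g
    have hstep : ∀ z, g.SameCycle z (g' z) := by
      intro z
      rcases eq_or_ne (g z) a with h1 | h1
      · have e : g' z = g (g z) := by
          simp [hg'def, Equiv.Perm.mul_apply, h1, Equiv.swap_apply_left]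
        rw [e]
        exact Equiv.Perm.SameCycle.trans (⟨1, by simp⟩ : g.SameCycle z (g z))
          (⟨1, by simp⟩ : g.SameCycle (g z) (g (g z)))
      rcases eq_or_ne (g z) (g a) with h2 | h2
      · have hz : z = a := g.injective h2
        have e : g' z = z := by
          rw [hg'def, Equiv.Perm.mul_apply, h2, Equiv.swap_apply_right, hz]
        rw [e]
      · have e : g' z = g z := by
          rw [hg'def, Equiv.Perm.mul_apply, Equiv.swap_apply_of_ne_of_ne h1 h2]
        rw [e]
        exact ⟨1, by simp⟩
    have hmono : ∀ x y, g'.SameCycle x y → g.SameCycle x y := sameCycle_of_step hstep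
    -- a and g a are not in the same cycle of g'
    have hnsc : ¬ g'.SameCycle a (g a) := by
      rintro ⟨kk, hkk⟩
      rw [Equiv.Perm.zpow_apply_eq_self_of_apply_eq_self hfix kk] at hkk
      exact hga hkk.symm
    -- cycleCount g + 1 ≤ cycleCount g'
    have h3 : cycleCount g < cycleCount g' := by
      rw [cycleCount_eq, cycleCount_eq]
      apply card_lt (Quotient.map' (s₁ := scSetoid g') (s₂ := scSetoid g) id
          (fun x y hxy => hmono x y hxy))
        (fun c => Quotient.inductionOn' c fun x => ⟨Quotient.mk'' x, rfl⟩)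
        (x := Quotient.mk'' a) (y := Quotient.mk'' (g a))
        (fun h => hnsc (Quotient.eq''.mp h))
      change (Quotient.mk'' a : Quotient (scSetoid g)) = Quotient.mk'' (g a)
      exact Quotient.sound' (⟨1, by simp⟩ : g.SameCycle a (g a))
    have h4 : cycleCount g < Nat.card α := by
      rw [cycleCount_eq]
      exact card_lt (Quotient.mk'' : α → Quotient (scSetoid g))
        (fun c => Quotient.inductionOn' c fun x => ⟨x, rfl⟩)
        (x := a) (y := g a) (fun h => hga h.symm)
        (Quotient.sound' (⟨1, by simp⟩ : g.SameCycle a (g a)))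
    -- joint orbit count increases by at most 1
    set r' : Setoid α :=
      MulAction.orbitRel (Subgroup.closure ({g', g₀} : Set (Equiv.Perm α))) α with hr'def
    have hg'mem : g' ∈ Subgroup.closure ({g', g₀} : Set (Equiv.Perm α)) :=
      Subgroup.subset_closure (Set.mem_insert _ _)
    have hg₀mem : g₀ ∈ Subgroup.closure ({g', g₀} : Set (Equiv.Perm α)) :=
      Subgroup.subset_closure (Set.mem_insert_of_mem _ rfl)
    have hr' : ∀ z, r'.r z (g' z) := fun z => r'.symm (orbitRel_of_mem hg'mem z)
    have hr0 : ∀ z, r'.r z (g₀ z) := fun z => r'.symm (orbitRel_of_mem hg₀mem z)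
    have hgM : ∀ z, (mergeS r' a (g a)).r z (g z) := by
      intro z
      rw [mergeS_r]
      have e : g z = Equiv.swap a (g a) (g' z) := by
        rw [hg'def, Equiv.Perm.mul_apply, Equiv.swap_apply_self]
      rcases eq_or_ne (g' z) a with h1 | h1
      · have hz : g z = g a := by rw [e, h1, Equiv.swap_apply_left]
        rw [hz]
        exact Or.inr (Or.inl ⟨h1 ▸ hr' z, r'.refl _⟩)
      rcases eq_or_ne (g' z) (g a) with h2 | h2
      · have hz : g z = a := by rw [e, h2, Equiv.swap_apply_right]
        rw [hz]
        exact Or.inr (Or.inr ⟨h2 ▸ hr' z, r'.refl _⟩)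
      · have hz : g z = g' z := by rw [e, Equiv.swap_apply_of_ne_of_ne h1 h2]
        rw [hz]
        exact Or.inl (hr' z)
    have hg0M : ∀ z, (mergeS r' a (g a)).r z (g₀ z) := fun z => Or.inl (hr0 z)
    have h2 : jointOrbitCount g' g₀ ≤ jointOrbitCount g g₀ + 1 := by
      rw [jointOrbitCount_eq, jointOrbitCount_eq]
      calc Nat.card (Quotient r')
          ≤ Nat.card (Quotient (mergeS r' a (g a))) + 1 := card_merge r' a (g a)
        _ ≤ Nat.card (Quotient (MulAction.orbitRel
              (Subgroup.closure ({g, g₀} : Set (Equiv.Perm α))) α)) + 1 := by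
            have := card_quot_le (r := MulAction.orbitRel
              (Subgroup.closure ({g, g₀} : Set (Equiv.Perm α))) α)
              (s := mergeS r' a (g a))
              (closure_pair_le (mergeS r' a (g a)) hgM hg0M)
            omega
    have h1 := ih g' g₀ (by omega)
    omega

end Stmt5Aux

/-- `N - #(g) ≥ #(g₀) - #⟨g,g₀⟩`, i.e. `d(g,e) ≥ #(g₀) - #⟨g,g₀⟩`. -/
theorem stmt5 {α : Type*} [Finite α] (g g₀ : Equiv.Perm α) :
    cycleCount g₀ ≤ (Nat.card α - cycleCount g) + jointOrbitCount g g₀ := by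
  exact Stmt5Aux.aux _ g g₀ le_rfl
end

section
/- Fix integers n ≥ 1 and even m ≥ 2, set N = m·n, let g_A, g_B be the permutations of ℤ/Nℤ defined in the context, and let f(g) = x_A·d(g,g_A) + x_B·d(g,g_B) + d(g,e). (i) If x_A ≥ 0, x_B ≥ 0 and x_A + x_B < 1, then f(g) > f(e) for every permutation g ≠ e; in particular the identity e is the unique minimizer of f, with f(e) = (x_A + x_B)·n·(m−1). (ii) If x_A > 0, x_B > 0 and x_A + x_B = 1, then f(g) ≥ n·(m−1) for all g ∈ S_N, with equality exactly when g ∈ Γ(g_A,e) ∩ Γ(g_B,e). -/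
/-- `Γ(g,h)`: the set of permutations on the Cayley geodesic between `g` and `h`. -/
def geodesic {α : Type*} (g h : Equiv.Perm α) : Set (Equiv.Perm α) :=
  {k | cayley g k + cayley k h = cayley g h}

set_option linter.unusedSectionVars false





open Equiv Equiv.Perm

def scSetoid {α : Type*} (g : Equiv.Perm α) : Setoid α :=
  Setoid.mk g.SameCycle
    ⟨fun x => Equiv.Perm.SameCycle.refl g x,
     fun h => h.symm,
     fun h₁ h₂ => h₁.trans h₂⟩

lemma cycleCount_def {α : Type*} (g : Equiv.Perm α) :
    cycleCount g = Nat.card (Quotient (scSetoid g)) := rfl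

lemma natCardOption (β : Type*) [Finite β] : Nat.card (Option β) = Nat.card β + 1 := by
  haveI := Fintype.ofFinite β
  simp [Nat.card_eq_fintype_card]

lemma cycleCount_inv {α : Type*} (g : Perm α) : cycleCount g⁻¹ = cycleCount g := by
  rw [cycleCount_def, cycleCount_def]
  exact Nat.card_congr (Quotient.congr (Equiv.refl α)
    (fun x y => Equiv.Perm.sameCycle_inv))

lemma cycleCount_one {α : Type*} : cycleCount (1 : Perm α) = Nat.card α := by
  rw [cycleCount_def]
  refine Nat.card_congr ⟨Quotient.lift id (fun a b h => Equiv.Perm.sameCycle_one.mp h),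
    fun a => Quotient.mk _ a, ?_, fun a => rfl⟩
  intro q; induction q using Quotient.ind; rfl

lemma cycleCount_conj {α : Type*} (σ g : Perm α) :
    cycleCount (σ * g * σ⁻¹) = cycleCount g := by
  rw [cycleCount_def, cycleCount_def]
  refine Nat.card_congr (Quotient.congr (σ.symm : α ≃ α) (fun x y => ?_))
  show (σ * g * σ⁻¹).SameCycle x y ↔ g.SameCycle (σ.symm x) (σ.symm y)
  rw [Equiv.Perm.sameCycle_conj]; rfl

lemma cycleCount_le_card {α : Type*} [Finite α] (g : Perm α) :
    cycleCount g ≤ Nat.card α := by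
  rw [cycleCount_def]
  exact Nat.card_le_card_of_surjective (Quotient.mk _) (Quotient.mk_surjective)

lemma cycleCount_lt_card {α : Type*} [Finite α] {g : Perm α} (hg : g ≠ 1) :
    cycleCount g < Nat.card α := by
  classical
  haveI := Fintype.ofFinite α
  obtain ⟨x, hx⟩ : ∃ x, g x ≠ x := by
    by_contra h; push_neg at h; exact hg (Equiv.ext h)
  rw [cycleCount_def, Nat.card_eq_fintype_card, Nat.card_eq_fintype_card]
  refine Fintype.card_lt_of_surjective_not_injective (Quotient.mk _)
    Quotient.mk_surjective ?_
  intro hinj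
  have : (Quotient.mk (scSetoid g) x) = Quotient.mk (scSetoid g) (g x) :=
    Quotient.sound (⟨1, by simp⟩ : g.SameCycle x (g x))
  exact hx (hinj this).symm

def joinSetoid {α : Type*} (g : Perm α) (a b : α) : Setoid α where
  r x y := g.SameCycle x y ∨ (g.SameCycle x a ∧ g.SameCycle b y) ∨
    (g.SameCycle x b ∧ g.SameCycle a y)
  iseqv := by
    constructor
    · intro x; exact Or.inl (Equiv.Perm.SameCycle.refl g x)
    · rintro x y (h | ⟨h1, h2⟩ | ⟨h1, h2⟩)
      · exact Or.inl h.symm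
      · exact Or.inr (Or.inr ⟨h2.symm, h1.symm⟩)
      · exact Or.inr (Or.inl ⟨h2.symm, h1.symm⟩)
    · rintro x y z (h | ⟨h1, h2⟩ | ⟨h1, h2⟩) (h' | ⟨h1', h2'⟩ | ⟨h1', h2'⟩)
      · exact Or.inl (h.trans h')
      · exact Or.inr (Or.inl ⟨h.trans h1', h2'⟩)
      · exact Or.inr (Or.inr ⟨h.trans h1', h2'⟩)
      · exact Or.inr (Or.inl ⟨h1, h2.trans h'⟩)
      · exact Or.inl (h1.trans (((h2.trans h1').symm).trans h2'))
      · exact Or.inl (h1.trans h2')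
      · exact Or.inr (Or.inr ⟨h1, h2.trans h'⟩)
      · exact Or.inl (h1.trans h2')
      · exact Or.inl (h1.trans (((h2.trans h1').symm).trans h2'))

lemma joinSetoid_step {α : Type*} [DecidableEq α] (g : Perm α) (a b : α) (z : α) :
    (joinSetoid g a b).r z ((g * Equiv.swap a b) z) := by
  by_cases hza : z = a
  · have : (g * Equiv.swap a b) z = g b := by
      rw [Equiv.Perm.mul_apply, hza, Equiv.swap_apply_left]
    rw [this]
    exact Or.inr (Or.inl ⟨by rw [hza], ⟨1, by simp⟩⟩)
  · by_cases hzb : z = b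
    · have : (g * Equiv.swap a b) z = g a := by
        rw [Equiv.Perm.mul_apply, hzb, Equiv.swap_apply_right]
      rw [this]
      exact Or.inr (Or.inr ⟨by rw [hzb], ⟨1, by simp⟩⟩)
    · have : (g * Equiv.swap a b) z = g z := by
        rw [Equiv.Perm.mul_apply, Equiv.swap_apply_of_ne_of_ne hza hzb]
      rw [this]
      exact Or.inl ⟨1, by simp⟩

lemma key1 {α : Type*} [Fintype α] [DecidableEq α] (g : Perm α) (a b : α) {x y : α}
    (h : (g * Equiv.swap a b).SameCycle x y) : (joinSetoid g a b).r x y := by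
  obtain ⟨i, -, -, hi⟩ := h.exists_pow_eq _
  subst hi
  clear h
  induction i generalizing x with
  | zero => exact (joinSetoid g a b).iseqv.refl x
  | succ k IH =>
    have hs : ((g * Equiv.swap a b) ^ (k + 1)) x
        = ((g * Equiv.swap a b) ^ k) ((g * Equiv.swap a b) x) := by
      rw [pow_succ, Equiv.Perm.mul_apply]
    rw [hs]
    exact (joinSetoid g a b).iseqv.trans (joinSetoid_step g a b x) IH

lemma key1' {α : Type*} [Fintype α] [DecidableEq α] (g : Perm α) (a b : α) {x y : α}
    (h : (Equiv.swap a b * g).SameCycle x y) : (joinSetoid g a b).r x y := by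
  have h2 : (g⁻¹ * Equiv.swap a b).SameCycle x y := by
    rw [← Equiv.Perm.sameCycle_inv] at h
    have he : (Equiv.swap a b * g)⁻¹ = g⁻¹ * Equiv.swap a b := by
      rw [mul_inv_rev, Equiv.swap_inv]
    rwa [he] at h
  have := key1 g⁻¹ a b h2
  change g⁻¹.SameCycle x y ∨ (g⁻¹.SameCycle x a ∧ g⁻¹.SameCycle b y) ∨
    (g⁻¹.SameCycle x b ∧ g⁻¹.SameCycle a y) at this
  change g.SameCycle x y ∨ (g.SameCycle x a ∧ g.SameCycle b y) ∨
    (g.SameCycle x b ∧ g.SameCycle a y)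
  simpa [joinSetoid, Equiv.Perm.sameCycle_inv] using this

lemma quot_le_join {α : Type*} [Fintype α] [DecidableEq α] (g : Perm α) (a b : α) :
    cycleCount g ≤ Nat.card (Quotient (joinSetoid g a b)) + 1 := by
  classical
  rw [cycleCount_def, ← natCardOption]
  have hwd : ∀ x y : α, (scSetoid g).r x y →
      (if g.SameCycle x a then (none : Option (Quotient (joinSetoid g a b)))
        else some (Quotient.mk (joinSetoid g a b) x)) =
      (if g.SameCycle y a then none else some (Quotient.mk (joinSetoid g a b) y)) := by
    intro x y hxy
    have hxy' : g.SameCycle x y := hxy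
    by_cases hx : g.SameCycle x a
    · rw [if_pos hx, if_pos (hxy'.symm.trans hx)]
    · rw [if_neg hx, if_neg (fun hy => hx (hxy'.trans hy))]
      exact congrArg some (Quotient.sound (Or.inl hxy'))
  refine Nat.card_le_card_of_injective (Quotient.lift _ hwd) ?_
  intro q1 q2
  induction q1 using Quotient.ind with | _ x =>
  induction q2 using Quotient.ind with | _ y =>
  intro h
  simp only [Quotient.lift_mk] at h
  by_cases hx : g.SameCycle x a <;> by_cases hy : g.SameCycle y a
  · exact Quotient.sound (hx.trans hy.symm)
  · rw [if_pos hx, if_neg hy] at h; exact absurd h (by simp)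
  · rw [if_neg hx, if_pos hy] at h; exact absurd h (by simp)
  · rw [if_neg hx, if_neg hy] at h
    have h' := Quotient.exact (Option.some_injective _ h)
    rcases h' with h' | ⟨h1, h2⟩ | ⟨h1, h2⟩
    · exact Quotient.sound h'
    · exact absurd h1 hx
    · exact absurd h2.symm hy

lemma join_le_cc {α : Type*} [Fintype α] [DecidableEq α] (g : Perm α) (a b : α) :
    Nat.card (Quotient (joinSetoid g a b)) ≤ cycleCount (g * Equiv.swap a b) := by
  rw [cycleCount_def]
  refine Nat.card_le_card_of_surjective
    (Quotient.lift (Quotient.mk (joinSetoid g a b))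
      (fun x y h => Quotient.sound (key1 g a b h))) ?_
  intro q
  induction q using Quotient.ind with | _ x =>
  exact ⟨Quotient.mk _ x, rfl⟩

lemma cc_le_mul_swap {α : Type*} [Fintype α] [DecidableEq α] (g : Perm α) (a b : α) :
    cycleCount g ≤ cycleCount (g * Equiv.swap a b) + 1 :=
  le_trans (quot_le_join g a b) (by have := join_le_cc g a b; omega)

lemma cc_le_swap_mul {α : Type*} [Fintype α] [DecidableEq α] (g : Perm α) (a b : α) :
    cycleCount g ≤ cycleCount (Equiv.swap a b * g) + 1 := by
  have h := cc_le_mul_swap g⁻¹ a b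
  rw [cycleCount_inv] at h
  have he : (g⁻¹ * Equiv.swap a b)⁻¹ = Equiv.swap a b * g := by
    rw [mul_inv_rev, Equiv.swap_inv, inv_inv]
  rw [← he, cycleCount_inv]
  exact h
section Cut
variable {α : Type*} [Fintype α] [DecidableEq α]

lemma cycleCount_cut (b : Equiv.Perm α) (x : α) (hx : b x ≠ x) :
    cycleCount b + 1 ≤ cycleCount (Equiv.swap x (b x) * b) := by
  classical
  set b' : Equiv.Perm α := Equiv.swap x (b x) * b with hb'
  have hb'x : b' x = x := by
    rw [hb', Equiv.Perm.mul_apply, Equiv.swap_apply_right]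
  have hfix : ∀ u : α, b'.SameCycle x u → u = x := by
    rintro u ⟨k, hk⟩
    rw [Equiv.Perm.zpow_apply_eq_self_of_apply_eq_self hb'x k] at hk
    exact hk.symm
  -- one step along b', skipping x
  have hstep : ∀ y : α, y ≠ x → b y ≠ x → b'.SameCycle y (b y) := by
    intro y hy hby
    have : b' y = b y := by
      rw [hb', Equiv.Perm.mul_apply,
        Equiv.swap_apply_of_ne_of_ne hby (fun h => hy (b.injective h))]
    exact ⟨1, by simp [this]⟩
  have hstep2 : ∀ y : α, b y = x → b'.SameCycle y (b x) := by
    intro y hy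
    have : b' y = b x := by rw [hb', Equiv.Perm.mul_apply, hy, Equiv.swap_apply_left]
    exact ⟨1, by simp [this]⟩
  -- walking along b avoiding x
  have hiter : ∀ i : ℕ, ∀ y z : α, (b ^ i) y = z → y ≠ x → z ≠ x → b'.SameCycle y z := by
    intro i
    induction i using Nat.strong_induction_on with
    | _ i IH =>
      intro y z hyz hy hz
      match i, hyz with
      | 0, hyz => simp at hyz; exact hyz ▸ Equiv.Perm.SameCycle.refl b' y
      | (i+1), hyz =>
        by_cases hby : b y = x
        · -- y = b⁻¹ x ; jump to b x
          have h1 : (b ^ i) x = z := by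
            rw [pow_succ, Equiv.Perm.mul_apply, hby] at hyz; exact hyz
          match i, h1 with
          | 0, h1 => simp at h1; exact absurd h1.symm hz
          | (i+1), h1 =>
            have h2 : (b ^ i) (b x) = z := by
              rw [pow_succ, Equiv.Perm.mul_apply] at h1; exact h1
            exact (hstep2 y hby).trans (IH i (by omega) (b x) z h2 hx hz)
        · have h2 : (b ^ i) (b y) = z := by
            rw [pow_succ, Equiv.Perm.mul_apply] at hyz; exact hyz
          exact (hstep y hy hby).trans (IH i (by omega) (b y) z h2 hby hz)
  have W : ∀ y z : α, y ≠ x → z ≠ x → b.SameCycle y z → b'.SameCycle y z := by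
    intro y z hy hz hyz
    obtain ⟨i, -, -, hi⟩ := hyz.exists_pow_eq _
    exact hiter i y z hi hy hz
  -- reverse inclusion
  have rev : ∀ y z : α, b'.SameCycle y z → b.SameCycle y z := by
    intro y z h
    have hxbx : b.SameCycle x (b x) := ⟨1, by simp⟩
    rcases key1' b x (b x) h with h' | ⟨h1, h2⟩ | ⟨h1, h2⟩
    · exact h'
    · exact (h1.trans hxbx).trans h2
    · exact (h1.trans hxbx.symm).trans h2
  -- the injection
  set s : α → α := fun y => if y = x then b x else y with hs
  have hsne : ∀ y, s y ≠ x := by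
    intro y; by_cases hy : y = x <;> simp [hs, hy, hx]
  have hssc : ∀ y, b.SameCycle (s y) y := by
    intro y; by_cases hy : y = x
    · subst hy; simp only [hs, if_pos rfl]; exact ⟨-1, by simp⟩
    · simp only [hs, if_neg hy]
      exact Equiv.Perm.SameCycle.refl b y
  have hwd : ∀ y z : α, (scSetoid b).r y z →
      Quotient.mk (scSetoid b') (s y) = Quotient.mk (scSetoid b') (s z) := by
    intro y z hyz
    exact Quotient.sound (W (s y) (s z) (hsne y) (hsne z)
      (((hssc y).trans hyz).trans (hssc z).symm))
  set Φ : Option (Quotient (scSetoid b)) → Quotient (scSetoid b') :=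
    fun o => o.elim (Quotient.mk (scSetoid b') x) (Quotient.lift _ hwd) with hΦ
  have hinj : Function.Injective Φ := by
    rintro (_ | q1) (_ | q2) h
    · rfl
    · exfalso
      induction q2 using Quotient.ind with | _ y =>
      have := hfix (s y) (Quotient.exact h)
      exact hsne y this
    · exfalso
      induction q1 using Quotient.ind with | _ y =>
      have := hfix (s y) (Quotient.exact h.symm)
      exact hsne y this
    · induction q1 using Quotient.ind with | _ y =>
      induction q2 using Quotient.ind with | _ z =>
      have h' : b'.SameCycle (s y) (s z) := Quotient.exact h
      have : b.SameCycle y z :=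
        ((hssc y).symm.trans (rev _ _ h')).trans (hssc z)
      exact congrArg some (Quotient.sound this)
  have := Nat.card_le_card_of_injective Φ hinj
  rwa [natCardOption, ← cycleCount_def, ← cycleCount_def] at this

lemma support_swap_mul_lt (b : Equiv.Perm α) (x : α) (hx : b x ≠ x) :
    (Equiv.swap x (b x) * b).support.card < b.support.card := by
  apply Finset.card_lt_card
  constructor
  · intro y hy
    rw [Equiv.Perm.mem_support] at hy ⊢
    intro hby
    apply hy
    rw [Equiv.Perm.mul_apply, hby]
    by_cases h1 : y = x
    · exfalso; rw [h1] at hby; exact hx hby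
    · by_cases h2 : y = b x
      · exfalso; rw [h2] at hby; exact hx (b.injective hby)
      · exact Equiv.swap_apply_of_ne_of_ne h1 h2
  · intro hsub
    have h1 : x ∈ b.support := Equiv.Perm.mem_support.mpr hx
    have h2 : x ∉ (Equiv.swap x (b x) * b).support := by
      rw [Equiv.Perm.mem_support]
      simp [Equiv.Perm.mul_apply, Equiv.swap_apply_right]
    exact h2 (hsub h1)

end Cut
section Subadd
variable {α : Type*} [Fintype α] [DecidableEq α]

lemma cycleCount_subadd (b a : Equiv.Perm α) :
    cycleCount a + cycleCount b ≤ Nat.card α + cycleCount (a * b) := by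
  by_cases hb : b = 1
  · subst hb
    rw [mul_one, cycleCount_one]
    omega
  · obtain ⟨x, hx⟩ : ∃ x, b x ≠ x := by
      by_contra h; push_neg at h; exact hb (Equiv.ext h)
    have hdec := support_swap_mul_lt b x hx
    have key := cycleCount_subadd (Equiv.swap x (b x) * b) (a * Equiv.swap x (b x))
    have hcut := cycleCount_cut b x hx
    have hdrop := cc_le_mul_swap a x (b x)
    have hprod : a * Equiv.swap x (b x) * (Equiv.swap x (b x) * b) = a * b := by
      rw [mul_assoc, ← mul_assoc (Equiv.swap x (b x)), Equiv.swap_mul_self, one_mul]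
    rw [hprod] at key
    omega
termination_by b.support.card
decreasing_by exact hdec

lemma cayley_comm (g h : Equiv.Perm α) : cayley g h = cayley h g := by
  unfold cayley
  rw [← cycleCount_inv (g * h⁻¹), mul_inv_rev, inv_inv]

lemma cayley_triangle (g k h : Equiv.Perm α) :
    cayley g h ≤ cayley g k + cayley k h := by
  unfold cayley
  have hsub := cycleCount_subadd (k * h⁻¹) (g * k⁻¹)
  have hprod : g * k⁻¹ * (k * h⁻¹) = g * h⁻¹ := by group
  rw [hprod] at hsub
  have h1 := cycleCount_le_card (g * k⁻¹)
  have h2 := cycleCount_le_card (k * h⁻¹)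
  have h3 := cycleCount_le_card (g * h⁻¹)
  omega

lemma cayley_self (g : Equiv.Perm α) : cayley g g = 0 := by
  unfold cayley
  rw [mul_inv_cancel, cycleCount_one]
  omega

lemma cayley_one_right (g : Equiv.Perm α) : cayley g 1 = Nat.card α - cycleCount g := by
  unfold cayley; rw [inv_one, mul_one]

lemma cayley_one_pos {g : Equiv.Perm α} (hg : g ≠ 1) : 1 ≤ cayley g 1 := by
  rw [cayley_one_right]
  have := cycleCount_lt_card hg
  omega

end Subadd
lemma blockPerm_count (n m : ℕ) (hn : 1 ≤ n) (hm : 2 ≤ m)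
    (gB : Equiv.Perm (ZMod (m * n)))
    (hgB : ∀ q r : ℕ, r < m →
      gB ((q * m + r : ℕ) : ZMod (m * n)) = ((q * m + (r + 1) % m : ℕ) : ZMod (m * n))) :
    cycleCount gB = n := by
  haveI : NeZero (m * n) := ⟨Nat.mul_ne_zero (by omega) (by omega)⟩
  have hm0 : 0 < m := by omega
  have hlt : ∀ q r : ℕ, q < n → r < m → q * m + r < m * n := by
    intro q r hq hr
    calc q * m + r < q * m + m := by omega
    _ = (q + 1) * m := by ring
    _ ≤ n * m := Nat.mul_le_mul_right m (by omega)
    _ = m * n := Nat.mul_comm n m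
  have hval : ∀ q r : ℕ, q < n → r < m →
      ((q * m + r : ℕ) : ZMod (m * n)).val = q * m + r := by
    intro q r hq hr; exact ZMod.val_cast_of_lt (hlt q r hq hr)
  have hpow : ∀ (k q r : ℕ), r < m →
      (gB ^ k) ((q * m + r : ℕ) : ZMod (m * n)) = ((q * m + (r + k) % m : ℕ) : ZMod (m * n)) := by
    intro k
    induction k with
    | zero => intro q r hr; simp [Nat.mod_eq_of_lt hr]
    | succ k IH =>
      intro q r hr
      have hs : (gB ^ (k + 1)) ((q * m + r : ℕ) : ZMod (m * n))
          = gB ((gB ^ k) ((q * m + r : ℕ) : ZMod (m * n))) := by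
        rw [pow_succ', Equiv.Perm.mul_apply]
      rw [hs, IH q r hr, hgB q ((r + k) % m) (Nat.mod_lt _ hm0)]
      congr 2
      rw [Nat.mod_add_mod, Nat.add_assoc]
  -- the bijection Fin n ≃ quotient
  set F : Fin n → Quotient (scSetoid gB) :=
    fun q => Quotient.mk (scSetoid gB) (((q : ℕ) * m : ℕ) : ZMod (m * n)) with hF
  have hinj : Function.Injective F := by
    intro q1 q2 h
    have h' : gB.SameCycle (((q1 : ℕ) * m : ℕ) : ZMod (m * n)) (((q2 : ℕ) * m : ℕ) : ZMod (m * n)) :=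
      Quotient.exact h
    obtain ⟨i, -, -, hi⟩ := h'.exists_pow_eq _
    have h0 : ((q1 : ℕ) * m : ℕ) = (q1 : ℕ) * m + 0 := by omega
    rw [h0, hpow i (q1 : ℕ) 0 hm0] at hi
    -- vals
    have hv1 : ((q1 : ℕ) * m + (0 + i) % m : ℕ) = ((q2 : ℕ) * m + 0 : ℕ) := by
      have e1 := hval (q1 : ℕ) ((0 + i) % m) q1.isLt (Nat.mod_lt _ hm0)
      have e2 := hval (q2 : ℕ) 0 q2.isLt hm0
      rw [← e1, ← e2, hi]
      norm_num
    have : (q1 : ℕ) = (q2 : ℕ) := by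
      have d1 : ((q1 : ℕ) * m + (0 + i) % m) / m = (q1 : ℕ) := by
        rw [Nat.add_comm ((q1 : ℕ) * m) ((0 + i) % m), Nat.add_mul_div_right _ _ hm0,
          Nat.div_eq_of_lt (Nat.mod_lt _ hm0)]
        omega
      have d2 : ((q2 : ℕ) * m + 0) / m = (q2 : ℕ) := by
        rw [Nat.add_comm ((q2 : ℕ) * m) 0, Nat.add_mul_div_right _ _ hm0]
        simp
      rw [← d1, ← d2, hv1]
    exact Fin.ext this
  have hsurj : Function.Surjective F := by
    intro Q
    induction Q using Quotient.ind with | _ x =>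
    set q : ℕ := x.val / m with hq
    set r : ℕ := x.val % m with hr
    have hqn : q < n := by
      rw [hq, Nat.div_lt_iff_lt_mul hm0]
      have hvx := ZMod.val_lt x
      have hc : m * n = n * m := Nat.mul_comm m n
      omega
    have hrm : r < m := Nat.mod_lt _ hm0
    have hx : x = ((q * m + r : ℕ) : ZMod (m * n)) := by
      have : q * m + r = x.val := by
        rw [hq, hr, Nat.mul_comm]
        exact Nat.div_add_mod x.val m
      rw [this]
      exact (ZMod.natCast_rightInverse x).symm
    refine ⟨⟨q, hqn⟩, ?_⟩
    rw [hF]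
    apply Quotient.sound
    show gB.SameCycle _ x
    refine ⟨(r : ℤ), ?_⟩
    rw [zpow_natCast]
    have h0 : (q * m : ℕ) = q * m + 0 := by omega
    simp only []
    rw [h0, hpow r q 0 hm0, hx]
    congr 2
    rw [Nat.zero_add, Nat.mod_eq_of_lt hrm]
  have := Nat.card_eq_of_bijective F ⟨hinj, hsurj⟩
  rw [Nat.card_eq_fintype_card, Fintype.card_fin] at this
  rw [cycleCount_def, ← this]
lemma cayley_one_left {α : Type*} (g : Equiv.Perm α) :
    cayley 1 g = Nat.card α - cycleCount g := by
  unfold cayley; rw [one_mul, cycleCount_inv]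


/-- (i) If `x_A + x_B < 1` (with `x_A, x_B ≥ 0`) the identity is the unique minimizer of
`f`, with `f(e) = (x_A + x_B) n (m-1)`.  (ii) If `x_A + x_B = 1` (with `x_A, x_B > 0`)
then `f(g) ≥ n(m-1)`, with equality exactly when `g ∈ Γ(g_A,e) ∩ Γ(g_B,e)`. -/
theorem stmt10 (n m : ℕ) (hn : 1 ≤ n) (hm : 2 ≤ m) (hme : Even m)
    (gB gA : Equiv.Perm (ZMod (m * n)))
(hgB : ∀ q r : ℕ, r < m →
      gB ((q * m + r : ℕ) : ZMod (m * n)) = ((q * m + (r + 1) % m : ℕ) : ZMod (m * n)))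
    (hgA : gA = Equiv.addLeft ((m / 2 : ℕ) : ZMod (m * n)) * gB *
      (Equiv.addLeft ((m / 2 : ℕ) : ZMod (m * n)))⁻¹)
    (x_A x_B : ℝ) :
    (0 ≤ x_A → 0 ≤ x_B → x_A + x_B < 1 →
      (∀ g : Equiv.Perm (ZMod (m * n)), g ≠ 1 →
        x_A * (cayley (1 : Equiv.Perm (ZMod (m * n))) gA : ℝ) +
            x_B * (cayley (1 : Equiv.Perm (ZMod (m * n))) gB : ℝ) +
            (cayley (1 : Equiv.Perm (ZMod (m * n))) 1 : ℝ) <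
          x_A * (cayley g gA : ℝ) + x_B * (cayley g gB : ℝ) + (cayley g 1 : ℝ)) ∧
      x_A * (cayley (1 : Equiv.Perm (ZMod (m * n))) gA : ℝ) +
          x_B * (cayley (1 : Equiv.Perm (ZMod (m * n))) gB : ℝ) +
          (cayley (1 : Equiv.Perm (ZMod (m * n))) 1 : ℝ) =
        (x_A + x_B) * (n : ℝ) * ((m : ℝ) - 1)) ∧
    (0 < x_A → 0 < x_B → x_A + x_B = 1 →
      ∀ g : Equiv.Perm (ZMod (m * n)),
        ((n : ℝ) * ((m : ℝ) - 1) ≤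
          x_A * (cayley g gA : ℝ) + x_B * (cayley g gB : ℝ) + (cayley g 1 : ℝ)) ∧
        (x_A * (cayley g gA : ℝ) + x_B * (cayley g gB : ℝ) + (cayley g 1 : ℝ) =
            (n : ℝ) * ((m : ℝ) - 1) ↔
          g ∈ geodesic gA 1 ∩ geodesic gB 1)) := by
  haveI : NeZero (m * n) := ⟨Nat.mul_ne_zero (by omega) (by omega)⟩
  have hNcard : Nat.card (ZMod (m * n)) = m * n := Nat.card_zmod _
  have ccB : cycleCount gB = n := blockPerm_count n m hn hm gB hgB
  have ccA : cycleCount gA = n := by rw [hgA, cycleCount_conj]; exact ccB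
  have hKA : cayley gA (1 : Equiv.Perm (ZMod (m * n))) = m * n - n := by
    rw [cayley_one_right, ccA, hNcard]
  have hKB : cayley gB (1 : Equiv.Perm (ZMod (m * n))) = m * n - n := by
    rw [cayley_one_right, ccB, hNcard]
  have h1A : cayley (1 : Equiv.Perm (ZMod (m * n))) gA = m * n - n := by
    rw [cayley_comm]; exact hKA
  have h1B : cayley (1 : Equiv.Perm (ZMod (m * n))) gB = m * n - n := by
    rw [cayley_comm]; exact hKB
  have h11 : cayley (1 : Equiv.Perm (ZMod (m * n))) 1 = 0 := cayley_self 1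
  have hle : n ≤ m * n := by
    calc n = 1 * n := (Nat.one_mul n).symm
    _ ≤ m * n := Nat.mul_le_mul_right n (by omega)
  have hKcast : ((m * n - n : ℕ) : ℝ) = (n : ℝ) * ((m : ℝ) - 1) := by
    rw [Nat.cast_sub hle]
    push_cast
    ring
  have triA : ∀ g : Equiv.Perm (ZMod (m * n)),
      (m * n - n : ℕ) ≤ cayley g gA + cayley g 1 := by
    intro g
    have h := cayley_triangle gA g (1 : Equiv.Perm (ZMod (m * n)))
    rw [hKA, cayley_comm gA g] at h
    exact h
  have triB : ∀ g : Equiv.Perm (ZMod (m * n)),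
      (m * n - n : ℕ) ≤ cayley g gB + cayley g 1 := by
    intro g
    have h := cayley_triangle gB g (1 : Equiv.Perm (ZMod (m * n)))
    rw [hKB, cayley_comm gB g] at h
    exact h
  constructor
  · intro hxA hxB hsum
    constructor
    · intro g hg
      rw [h1A, h1B, h11]
      set dA : ℝ := (cayley g gA : ℝ) with hdA
      set dB : ℝ := (cayley g gB : ℝ) with hdB
      set d1 : ℝ := (cayley g 1 : ℝ) with hd1def
      set K : ℝ := ((m * n - n : ℕ) : ℝ) with hKdef
      have tA' : K ≤ dA + d1 := by rw [hdA, hd1def, hKdef]; exact_mod_cast triA g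
      have tB' : K ≤ dB + d1 := by rw [hdB, hd1def, hKdef]; exact_mod_cast triB g
      have hd1 : (1 : ℝ) ≤ d1 := by
        rw [hd1def]; exact_mod_cast cayley_one_pos hg
      have hpA : x_A * K ≤ x_A * (dA + d1) := mul_le_mul_of_nonneg_left tA' hxA
      have hpB : x_B * K ≤ x_B * (dB + d1) := mul_le_mul_of_nonneg_left tB' hxB
      have hd : (1 - x_A - x_B) * 1 ≤ (1 - x_A - x_B) * d1 :=
        mul_le_mul_of_nonneg_left hd1 (by linarith)
      have e1 : x_A * (dA + d1) + x_B * (dB + d1) + (1 - x_A - x_B) * d1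
          = x_A * dA + x_B * dB + d1 := by ring
      rw [Nat.cast_zero]
      linarith
    · rw [h1A, h1B, h11, hKcast, Nat.cast_zero]
      ring
  · intro hxA hxB hsum g
    set dA : ℝ := (cayley g gA : ℝ) with hdA
    set dB : ℝ := (cayley g gB : ℝ) with hdB
    set d1 : ℝ := (cayley g 1 : ℝ) with hd1def
    set Kr : ℝ := (n : ℝ) * ((m : ℝ) - 1) with hKrdef
    have tA' : Kr ≤ dA + d1 := by
      rw [hdA, hd1def, ← hKcast]; exact_mod_cast triA g
    have tB' : Kr ≤ dB + d1 := by
      rw [hdB, hd1def, ← hKcast]; exact_mod_cast triB g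
    have hpA : x_A * Kr ≤ x_A * (dA + d1) := mul_le_mul_of_nonneg_left tA' hxA.le
    have hpB : x_B * Kr ≤ x_B * (dB + d1) := mul_le_mul_of_nonneg_left tB' hxB.le
    have e1 : x_A * (dA + d1) + x_B * (dB + d1)
        = x_A * dA + x_B * dB + (x_A + x_B) * d1 := by ring
    rw [hsum, one_mul] at e1
    have e2 : x_A * Kr + x_B * Kr = Kr := by rw [← add_mul, hsum, one_mul]
    constructor
    · linarith
    · constructor
      · intro heq
        have eA : dA + d1 = Kr := by
          by_contra hne
          have hlt2 : Kr < dA + d1 := lt_of_le_of_ne tA' (fun h => hne h.symm)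
          have hpA' : x_A * Kr < x_A * (dA + d1) := mul_lt_mul_of_pos_left hlt2 hxA
          linarith
        have eB : dB + d1 = Kr := by
          by_contra hne
          have hlt2 : Kr < dB + d1 := lt_of_le_of_ne tB' (fun h => hne h.symm)
          have hpB' : x_B * Kr < x_B * (dB + d1) := mul_lt_mul_of_pos_left hlt2 hxB
          linarith
        have eAn : cayley g gA + cayley g 1 = m * n - n := by
          have : ((cayley g gA + cayley g 1 : ℕ) : ℝ) = ((m * n - n : ℕ) : ℝ) := by
            push_cast
            rw [← hdA, ← hd1def, hKcast]
            exact eA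
          exact_mod_cast this
        have eBn : cayley g gB + cayley g 1 = m * n - n := by
          have : ((cayley g gB + cayley g 1 : ℕ) : ℝ) = ((m * n - n : ℕ) : ℝ) := by
            push_cast
            rw [← hdB, ← hd1def, hKcast]
            exact eB
          exact_mod_cast this
        constructor
        · show cayley gA g + cayley g 1 = cayley gA 1
          rw [cayley_comm gA g, hKA]
          exact eAn
        · show cayley gB g + cayley g 1 = cayley gB 1
          rw [cayley_comm gB g, hKB]
          exact eBn
      · rintro ⟨mA, mB⟩
        have eAn : cayley g gA + cayley g 1 = m * n - n := by
          have h : cayley gA g + cayley g 1 = cayley gA 1 := mA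
          rw [cayley_comm gA g, hKA] at h
          exact h
        have eBn : cayley g gB + cayley g 1 = m * n - n := by
          have h : cayley gB g + cayley g 1 = cayley gB 1 := mB
          rw [cayley_comm gB g, hKB] at h
          exact h
        have eA : dA + d1 = Kr := by
          rw [hdA, hd1def, ← hKcast]
          exact_mod_cast eAn
        have eB : dB + d1 = Kr := by
          rw [hdB, hd1def, ← hKcast]
          exact_mod_cast eBn
        have h3 : x_A * (dA + d1) = x_A * Kr := by rw [eA]
        have h4 : x_B * (dB + d1) = x_B * Kr := by rw [eB]
        linarith
end

section
/- Fix integers n ≥ 1 and even m ≥ 2, set N = m·n, and let g_A, g_B be the permutations of ℤ/Nℤ defined in the context. Then the intersection of Cayley geodesics Γ(g_A,g_B) ∩ Γ(g_A,e) consists of the single element g_A: the only permutation k of ℤ/Nℤ satisfying both d(g_A,k) + d(k,g_B) = d(g_A,g_B) and d(g_A,k) + d(k,e) = d(g_A,e) is k = g_A. -/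
open Equiv Equiv.Perm Function

variable {α : Type*}

def scS (g : Equiv.Perm α) : Setoid α := Setoid.mk g.SameCycle
    ⟨fun x => Equiv.Perm.SameCycle.refl g x,
     fun h => h.symm,
     fun h₁ h₂ => h₁.trans h₂⟩

lemma cc_def (g : Equiv.Perm α) : cycleCount g = Nat.card (Quotient (scS g)) := rfl

-- collision lemma
lemma card_add_one_le {β : Type*} [Finite α] (f : α → β) (hf : Surjective f)
    {p q : α} (hne : p ≠ q) (heq : f p = f q) : Nat.card β + 1 ≤ Nat.card α := by
  obtain ⟨s, hs⟩ := hf.hasRightInverse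
  have hsi : Injective s := fun b1 b2 h => by rw [← hs b1, ← hs b2, h]
  have hz : ∃ z, ∀ b, s b ≠ z := by
    by_cases hp : s (f p) = p
    · exact ⟨q, fun b hb => by
        have : b = f q := by rw [← hs b, hb]
        subst this
        rw [← heq, hp] at hb; exact hne hb⟩
    · exact ⟨p, fun b hb => by
        have : b = f p := by rw [← hs b, hb]
        subst this; exact hp hb⟩
  obtain ⟨z, hzr⟩ := hz
  haveI : Finite β := Finite.of_surjective f hf
  have : Injective (fun o : Option β => o.elim z s) := by
    intro o1 o2 h
    match o1, o2, h with
    | none, none, _ => rfl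
    | none, some b, h => exact absurd h.symm (hzr b)
    | some b, none, h => exact absurd h (hzr b)
    | some b1, some b2, h => exact congrArg some (hsi h)
  calc Nat.card β + 1 = Nat.card (Option β) := (Finite.card_option).symm
    _ ≤ Nat.card α := Nat.card_le_card_of_injective _ this

section CC
variable [Finite α] (g k : Equiv.Perm α)

lemma cc_le_card : cycleCount g ≤ Nat.card α := by
  rw [cc_def]
  exact Nat.card_le_card_of_surjective _ (Quotient.mk''_surjective)

lemma cc_le_of_imp {g k : Equiv.Perm α} (h : ∀ p q, g.SameCycle p q → k.SameCycle p q) :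
    cycleCount k ≤ cycleCount g := by
  rw [cc_def, cc_def]
  have hsurj : Surjective (fun c : Quotient (scS g) =>
      Quotient.liftOn' c (fun x => (Quotient.mk'' x : Quotient (scS k)))
        (fun p q hpq => Quotient.sound' (h p q hpq))) := by
    intro c
    obtain ⟨x, rfl⟩ := Quotient.exists_rep c
    exact ⟨Quotient.mk'' x, rfl⟩
  exact Nat.card_le_card_of_surjective _ hsurj

lemma cc_add_one_le {g k : Equiv.Perm α} (h : ∀ p q, g.SameCycle p q → k.SameCycle p q)
    {a b : α} (hg : ¬ g.SameCycle a b) (hk : k.SameCycle a b) :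
    cycleCount k + 1 ≤ cycleCount g := by
  rw [cc_def, cc_def]
  set f : Quotient (scS g) → Quotient (scS k) := fun c =>
      Quotient.liftOn' c (fun x => (Quotient.mk'' x : Quotient (scS k)))
        (fun p q hpq => Quotient.sound' (h p q hpq)) with hf
  have hsurj : Surjective f := by
    intro c
    obtain ⟨x, rfl⟩ := Quotient.exists_rep c
    exact ⟨Quotient.mk'' x, rfl⟩
  refine card_add_one_le f hsurj (p := Quotient.mk'' a) (q := Quotient.mk'' b) ?_ ?_
  · intro hq
    exact hg (Quotient.exact' hq)
  · exact Quotient.sound' hk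

lemma cc_one : cycleCount (1 : Equiv.Perm α) = Nat.card α := by
  rw [cc_def]
  refine (Nat.card_eq_of_bijective (fun x => (Quotient.mk'' x : Quotient (scS 1))) ⟨?_, ?_⟩).symm
  · intro p q hpq
    have := Quotient.exact' hpq
    rwa [← Equiv.Perm.sameCycle_one]
  · intro c; obtain ⟨x, rfl⟩ := Quotient.exists_rep c; exact ⟨x, rfl⟩

lemma cc_lt_of_ne_one {g : Equiv.Perm α} (hg : g ≠ 1) : cycleCount g + 1 ≤ Nat.card α := by
  have : ∃ a, g a ≠ a := by
    by_contra hc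
    push_neg at hc
    exact hg (Equiv.ext fun x => by simp [hc x])
  obtain ⟨a, ha⟩ := this
  rw [cc_def]
  refine card_add_one_le (fun x => (Quotient.mk'' x : Quotient (scS g))) ?_ (p := a) (q := g a)
    (Ne.symm ha) (Quotient.sound' ⟨1, by simp⟩)
  intro c; obtain ⟨x, rfl⟩ := Quotient.exists_rep c; exact ⟨x, rfl⟩

end CC

section Swap
variable [Finite α] [DecidableEq α] {g : Equiv.Perm α} {a b : α}

lemma sc_of_step {g k : Equiv.Perm α} (step : ∀ x, k.SameCycle x (g x)) :
    ∀ p q, g.SameCycle p q → k.SameCycle p q := by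
  intro p q hpq
  obtain ⟨i, _, rfl⟩ := hpq.exists_pow_eq'
  clear * - step
  induction i with
  | zero => exact ⟨0, rfl⟩
  | succ j ih =>
      have : (g ^ (j + 1)) p = g ((g ^ j) p) := by
        rw [pow_succ', Equiv.Perm.mul_apply]
      rw [this]
      exact ih.trans (step _)

lemma sc_merge_ba (hab : a ≠ b) (hgab : ¬ g.SameCycle a b) :
    (Equiv.swap a b * g).SameCycle b a := by
  have hex : ∃ j, 0 < j ∧ (g ^ j) b = b := by
    refine ⟨orderOf g, orderOf_pos g, ?_⟩
    rw [pow_orderOf_eq_one]; rfl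
  classical
  set K := Nat.find hex with hKdef
  obtain ⟨hK0, hKb⟩ : 0 < K ∧ (g ^ K) b = b := Nat.find_spec hex
  have hmin : ∀ j, j < K → ¬(0 < j ∧ (g ^ j) b = b) := fun j hj => Nat.find_min hex hj
  have key : ∀ i, i < K → ((Equiv.swap a b * g) ^ i) b = (g ^ i) b := by
    intro i
    induction i with
    | zero => intro _; rfl
    | succ j ih =>
        intro hj
        have hj' : j < K := Nat.lt_of_succ_lt hj
        have h1 : (g ^ (j + 1)) b ≠ b := fun hc => hmin (j + 1) hj ⟨Nat.succ_pos j, hc⟩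
        have h2 : (g ^ (j + 1)) b ≠ a := fun hc =>
          hgab (Equiv.Perm.SameCycle.symm ⟨(j + 1 : ℕ), by rw [zpow_natCast, hc]⟩)
        calc ((Equiv.swap a b * g) ^ (j + 1)) b
            = (Equiv.swap a b * g) (((Equiv.swap a b * g) ^ j) b) := by
              rw [pow_succ', Equiv.Perm.mul_apply]
          _ = Equiv.swap a b ((g ^ (j+1)) b) := by
              rw [ih hj', Equiv.Perm.mul_apply, ← Equiv.Perm.mul_apply g, ← pow_succ']
          _ = (g ^ (j + 1)) b := Equiv.swap_apply_of_ne_of_ne h2 h1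
  have hK1 : K = (K - 1) + 1 := (Nat.succ_pred_eq_of_pos hK0).symm
  have final : ((Equiv.swap a b * g) ^ ((K - 1) + 1)) b = a := by
    calc ((Equiv.swap a b * g) ^ ((K - 1) + 1)) b
        = (Equiv.swap a b * g) (((Equiv.swap a b * g) ^ (K - 1)) b) := by
          rw [pow_succ', Equiv.Perm.mul_apply]
      _ = Equiv.swap a b ((g ^ ((K - 1) + 1)) b) := by
          rw [key (K - 1) (by omega), Equiv.Perm.mul_apply, ← Equiv.Perm.mul_apply g,
            ← pow_succ']
      _ = a := by rw [← hK1, hKb]; exact Equiv.swap_apply_right a b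
  exact ⟨(((K - 1) + 1 : ℕ) : ℤ), by rw [zpow_natCast, final]⟩

lemma sc_merge (hab : a ≠ b) (hgab : ¬ g.SameCycle a b) :
    ∀ p q, g.SameCycle p q → (Equiv.swap a b * g).SameCycle p q := by
  refine sc_of_step (fun x => ?_)
  by_cases h1 : g x = a
  · rw [h1]
    have hxb : (Equiv.swap a b * g).SameCycle x b :=
      ⟨1, by rw [zpow_one, Equiv.Perm.mul_apply, h1, Equiv.swap_apply_left]⟩
    exact hxb.trans (sc_merge_ba hab hgab)
  · by_cases h2 : g x = b
    · rw [h2]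
      have hxa : (Equiv.swap a b * g).SameCycle x a :=
        ⟨1, by rw [zpow_one, Equiv.Perm.mul_apply, h2, Equiv.swap_apply_right]⟩
      exact hxa.trans (sc_merge_ba hab hgab).symm
    · exact ⟨1, by rw [zpow_one, Equiv.Perm.mul_apply, Equiv.swap_apply_of_ne_of_ne h1 h2]⟩

lemma sc_split_refine (hgab : g.SameCycle a b) :
    ∀ p q, (Equiv.swap a b * g).SameCycle p q → g.SameCycle p q := by
  refine sc_of_step (fun x => ?_)
  by_cases h1 : g x = a
  · have hx : (Equiv.swap a b * g) x = b := by
      rw [Equiv.Perm.mul_apply, h1, Equiv.swap_apply_left]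
    rw [hx]
    exact (show g.SameCycle x a from ⟨1, by rw [zpow_one, h1]⟩).trans hgab
  · by_cases h2 : g x = b
    · have hx : (Equiv.swap a b * g) x = a := by
        rw [Equiv.Perm.mul_apply, h2, Equiv.swap_apply_right]
      rw [hx]
      exact (show g.SameCycle x b from ⟨1, by rw [zpow_one, h2]⟩).trans hgab.symm
    · have hx : (Equiv.swap a b * g) x = g x := by
        rw [Equiv.Perm.mul_apply, Equiv.swap_apply_of_ne_of_ne h1 h2]
      rw [hx]
      exact ⟨1, by rw [zpow_one]⟩

end Swap

section Swap2
variable [Finite α] [DecidableEq α] {g : Equiv.Perm α} {a b : α}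

lemma sc_split_not (hab : a ≠ b) (hgab : g.SameCycle a b) :
    ¬ (Equiv.swap a b * g).SameCycle a b := by
  intro hc
  -- minimal period K of a under g
  have hexK : ∃ j, 0 < j ∧ (g ^ j) a = a := by
    refine ⟨orderOf g, orderOf_pos g, ?_⟩
    rw [pow_orderOf_eq_one]; rfl
  have hexk : ∃ j, 0 < j ∧ (g ^ j) a = b := by
    obtain ⟨i, _, hi⟩ := hgab.exists_pow_eq'
    rcases Nat.eq_zero_or_pos i with h0 | h0
    · exact absurd (by rw [h0] at hi; exact hi) hab
    · exact ⟨i, h0, hi⟩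
  classical
  set K := Nat.find hexK with hKdef
  obtain ⟨hK0, hKa⟩ : 0 < K ∧ (g ^ K) a = a := Nat.find_spec hexK
  have hKmin : ∀ j, j < K → ¬(0 < j ∧ (g ^ j) a = a) := fun j hj => Nat.find_min hexK hj
  set k := Nat.find hexk with hkdef
  obtain ⟨hk0, hkb⟩ : 0 < k ∧ (g ^ k) a = b := Nat.find_spec hexk
  have hkmin : ∀ j, j < k → ¬(0 < j ∧ (g ^ j) a = b) := fun j hj => Nat.find_min hexk hj
  have hkK : k < K := by
    by_contra hge
    push_neg at hge
    rcases Nat.eq_or_lt_of_le hge with heq | hlt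
    · rw [← heq] at hkb; rw [hKa] at hkb; exact hab hkb
    · have : (g ^ (k - K)) a = b := by
        have : g ^ k = g ^ (k - K) * g ^ K := by
          rw [← pow_add]; congr 1; omega
        rw [this, Equiv.Perm.mul_apply, hKa] at hkb; exact hkb
      exact hkmin (k - K) (by omega) ⟨by omega, this⟩
  -- the set S
  set S : α → Prop := fun y => ∃ i, k ≤ i ∧ i < K ∧ (g ^ i) a = y with hSdef
  have hSb : S b := ⟨k, le_refl k, hkK, hkb⟩
  have hSa : ¬ S a := by
    rintro ⟨i, hik, hiK, hia⟩
    exact hKmin i hiK ⟨by omega, hia⟩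
  have hstep : ∀ y, S y → S ((Equiv.swap a b * g) y) := by
    rintro y ⟨i, hik, hiK, rfl⟩
    rcases Nat.eq_or_lt_of_le (Nat.succ_le_of_lt hiK) with heq | hlt
    · -- i + 1 = K
      have heq' : i + 1 = K := heq
      have : (Equiv.swap a b * g) ((g ^ i) a) = b := by
        rw [Equiv.Perm.mul_apply, ← Equiv.Perm.mul_apply g, ← pow_succ', heq', hKa,
          Equiv.swap_apply_left]
      rw [this]; exact hSb
    · -- i + 1 < K
      have h1 : (g ^ (i + 1)) a ≠ a := fun hc => hKmin (i + 1) hlt ⟨by omega, hc⟩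
      have h2 : (g ^ (i + 1)) a ≠ b := by
        intro hc
        have hkk : (g ^ k) ((g ^ (i + 1 - k)) a) = (g ^ k) a := by
          rw [← Equiv.Perm.mul_apply, ← pow_add, (by omega : k + (i + 1 - k) = i + 1), hc, hkb]
        have : (g ^ (i + 1 - k)) a = a := (g ^ k).injective hkk
        exact hKmin (i + 1 - k) (by omega) ⟨by omega, this⟩
      have : (Equiv.swap a b * g) ((g ^ i) a) = (g ^ (i + 1)) a := by
        rw [Equiv.Perm.mul_apply, ← Equiv.Perm.mul_apply g, ← pow_succ',
          Equiv.swap_apply_of_ne_of_ne h1 h2]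
      rw [this]
      exact ⟨i + 1, by omega, hlt, rfl⟩
  have hall : ∀ j : ℕ, S (((Equiv.swap a b * g) ^ j) b) := by
    intro j
    induction j with
    | zero => exact hSb
    | succ i ih =>
        have : ((Equiv.swap a b * g) ^ (i + 1)) b
            = (Equiv.swap a b * g) (((Equiv.swap a b * g) ^ i) b) := by
          rw [pow_succ', Equiv.Perm.mul_apply]
        rw [this]; exact hstep _ ih
  obtain ⟨j, _, hj⟩ := hc.symm.exists_pow_eq'
  have := hall j
  rw [hj] at this
  exact hSa this

end Swap2

section Swap3
variable [Finite α] [DecidableEq α] {g : Equiv.Perm α} {a b : α}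

/-- In the merge case, any same-cycle pair of `swap a b * g` is either a same-cycle pair
of `g` or both points lie in the union of the `g`-cycles of `a` and `b`. -/
lemma sc_merge_char (hgab : ¬ g.SameCycle a b) :
    ∀ p q, (Equiv.swap a b * g).SameCycle p q →
      g.SameCycle p q ∨ ((g.SameCycle p a ∨ g.SameCycle p b) ∧
        (g.SameCycle q a ∨ g.SameCycle q b)) := by
  have step : ∀ p x, (g.SameCycle p x ∨ ((g.SameCycle p a ∨ g.SameCycle p b) ∧
      (g.SameCycle x a ∨ g.SameCycle x b))) →
      (g.SameCycle p ((Equiv.swap a b * g) x) ∨ ((g.SameCycle p a ∨ g.SameCycle p b) ∧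
      ((g.SameCycle ((Equiv.swap a b * g) x) a ∨ g.SameCycle ((Equiv.swap a b * g) x) b)))) := by
    intro p x hR
    have hxgx : g.SameCycle x (g x) := ⟨1, by rw [zpow_one]⟩
    by_cases h1 : g x = a
    · have hx : (Equiv.swap a b * g) x = b := by
        rw [Equiv.Perm.mul_apply, h1, Equiv.swap_apply_left]
      rw [hx]
      right
      refine ⟨?_, Or.inr (Equiv.Perm.SameCycle.refl g b)⟩
      rcases hR with h | ⟨h, _⟩
      · exact Or.inl (h.trans (by rw [← h1]; exact hxgx))
      · exact h
    · by_cases h2 : g x = b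
      · have hx : (Equiv.swap a b * g) x = a := by
          rw [Equiv.Perm.mul_apply, h2, Equiv.swap_apply_right]
        rw [hx]
        right
        refine ⟨?_, Or.inl (Equiv.Perm.SameCycle.refl g a)⟩
        rcases hR with h | ⟨h, _⟩
        · exact Or.inr (h.trans (by rw [← h2]; exact hxgx))
        · exact h
      · have hx : (Equiv.swap a b * g) x = g x := by
          rw [Equiv.Perm.mul_apply, Equiv.swap_apply_of_ne_of_ne h1 h2]
        rw [hx]
        rcases hR with h | ⟨h, h'⟩
        · exact Or.inl (h.trans hxgx)
        · right
          refine ⟨h, ?_⟩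
          rcases h' with h' | h'
          · exact Or.inl (hxgx.symm.trans h')
          · exact Or.inr (hxgx.symm.trans h')
  intro p q hpq
  obtain ⟨i, _, rfl⟩ := hpq.exists_pow_eq'
  clear * - step
  induction i with
  | zero => exact Or.inl (Equiv.Perm.SameCycle.refl g p)
  | succ j ih =>
      have hrw : ((Equiv.swap a b * g) ^ (j + 1)) p
          = (Equiv.swap a b * g) (((Equiv.swap a b * g) ^ j) p) := by
        rw [pow_succ', Equiv.Perm.mul_apply]
      rw [hrw]
      exact step p _ ih

-- counting corollaries
lemma cc_split_count (hab : a ≠ b) (hgab : g.SameCycle a b) :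
    cycleCount g + 1 ≤ cycleCount (Equiv.swap a b * g) :=
  cc_add_one_le (sc_split_refine hgab) (sc_split_not hab hgab) hgab

lemma cc_merge_upper (hab : a ≠ b) (hgab : ¬ g.SameCycle a b) :
    cycleCount (Equiv.swap a b * g) ≤ cycleCount g :=
  cc_le_of_imp (sc_merge hab hgab)

lemma cc_merge_lower (hab : a ≠ b) (hgab : ¬ g.SameCycle a b) :
    cycleCount g ≤ cycleCount (Equiv.swap a b * g) + 1 := by
  classical
  rw [cc_def, cc_def]
  set h := Equiv.swap a b * g with hh
  set F : Quotient (scS g) → Option (Quotient (scS h)) := fun c =>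
    Quotient.liftOn' c
      (fun x => if g.SameCycle x b then (none : Option (Quotient (scS h)))
        else some (Quotient.mk'' x))
      (by
        intro p q hpq
        by_cases hb : g.SameCycle p b
        · rw [if_pos hb, if_pos ((Equiv.Perm.SameCycle.symm hpq).trans hb)]
        · rw [if_neg hb, if_neg (fun hq => hb (hpq.trans hq))]
          exact congrArg some (Quotient.sound' (sc_merge hab hgab p q hpq))) with hF
  have hinj : Function.Injective F := by
    intro c1 c2 hc
    obtain ⟨p, rfl⟩ := Quotient.exists_rep c1
    obtain ⟨q, rfl⟩ := Quotient.exists_rep c2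
    by_cases hp : g.SameCycle p b <;> by_cases hq : g.SameCycle q b <;>
      simp only [hF, Quotient.liftOn'_mk'', Quotient.liftOn'_mk, if_pos, if_neg, hp, hq,
        if_true, if_false, ite_true, ite_false] at hc
    · exact Quotient.sound' (hp.trans hq.symm)
    · exact absurd hc (by simp)
    · exact absurd hc (by simp)
    · have hsch : h.SameCycle p q := Quotient.exact' (Option.some_injective _ hc)
      rcases sc_merge_char hgab p q hsch with hg | ⟨hpa, hqa⟩
      · exact Quotient.sound' hg
      · have hpa' : g.SameCycle p a := hpa.resolve_right hp
        have hqa' : g.SameCycle q a := hqa.resolve_right hq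
        exact Quotient.sound' (hpa'.trans hqa'.symm)
  haveI := Fintype.ofFinite (Quotient (scS h))
  calc Nat.card (Quotient (scS g)) ≤ Nat.card (Option (Quotient (scS h))) :=
        Nat.card_le_card_of_injective F hinj
    _ = Nat.card (Quotient (scS h)) + 1 := Finite.card_option

end Swap3

section Length
variable [Finite α] [DecidableEq α]

lemma l_swap_step {a b : α} (hab : a ≠ b) (y : Equiv.Perm α) :
    Nat.card α - cycleCount (Equiv.swap a b * y) ≤ (Nat.card α - cycleCount y) + 1 := by
  have h1 := cc_le_card y
  have h2 := cc_le_card (Equiv.swap a b * y)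
  by_cases hsc : y.SameCycle a b
  · have := cc_split_count hab hsc
    omega
  · have := cc_merge_lower hab hsc
    omega

lemma decomp_aux : ∀ (N : ℕ) (g : Equiv.Perm α), Nat.card α - cycleCount g ≤ N →
    ∃ L : List (Equiv.Perm α), (∀ τ ∈ L, ∃ a b, a ≠ b ∧ τ = Equiv.swap a b) ∧
      g = L.prod ∧ L.length ≤ Nat.card α - cycleCount g := by
  intro N
  induction N with
  | zero =>
      intro g hg
      have hg1 : g = 1 := by
        by_contra hne
        have := cc_lt_of_ne_one hne
        omega
      exact ⟨[], by simp, by simp [hg1], by simp⟩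
  | succ N ih =>
      intro g hg
      by_cases hg1 : g = 1
      · exact ⟨[], by simp, by simp [hg1], by simp⟩
      · have : ∃ a, g a ≠ a := by
          by_contra hc
          push_neg at hc
          exact hg1 (Equiv.ext fun x => by simp [hc x])
        obtain ⟨a, ha⟩ := this
        have hab : a ≠ g a := Ne.symm ha
        have hsc : g.SameCycle a (g a) := ⟨1, by rw [zpow_one]⟩
        have hsplit := cc_split_count hab hsc
        have hle := cc_le_card (Equiv.swap a (g a) * g)
        have hrec : Nat.card α - cycleCount (Equiv.swap a (g a) * g) ≤ N := by omega
        obtain ⟨L, hL1, hL2, hL3⟩ := ih (Equiv.swap a (g a) * g) hrec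
        refine ⟨Equiv.swap a (g a) :: L, ?_, ?_, ?_⟩
        · intro τ hτ
          rcases List.mem_cons.mp hτ with h | h
          · exact ⟨a, g a, hab, h⟩
          · exact hL1 τ h
        · rw [List.prod_cons, ← hL2, ← mul_assoc, Equiv.swap_mul_self, one_mul]
        · simp only [List.length_cons]
          omega

lemma l_subadd (u v : Equiv.Perm α) :
    Nat.card α - cycleCount (u * v) ≤
      (Nat.card α - cycleCount u) + (Nat.card α - cycleCount v) := by
  obtain ⟨L, hL1, hL2, hL3⟩ := decomp_aux (Nat.card α - cycleCount u) u le_rfl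
  suffices h : ∀ (L : List (Equiv.Perm α)), (∀ τ ∈ L, ∃ a b, a ≠ b ∧ τ = Equiv.swap a b) →
      Nat.card α - cycleCount (L.prod * v) ≤ L.length + (Nat.card α - cycleCount v) by
    have := h L hL1
    rw [← hL2] at this
    omega
  intro L
  induction L with
  | nil => intro _; simp
  | cons τ L' ih =>
      intro hmem
      obtain ⟨a, b, hab, rfl⟩ := hmem _ (List.mem_cons_self (a := τ) (l := L'))
      have hrest := ih (fun σ hσ => hmem σ (List.mem_cons_of_mem _ hσ))
      have hstep := l_swap_step hab (L'.prod * v)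
      rw [List.prod_cons, mul_assoc]
      simp only [List.length_cons]
      omega

end Length

lemma sameCycle_invariant {β : Type*} {f : α → β} {g : Equiv.Perm α}
    (hf : ∀ x, f (g x) = f x) {p q : α} (h : g.SameCycle p q) : f p = f q := by
  have hn : ∀ (j : ℕ) (x : α), f ((g ^ j) x) = f x := by
    intro j
    induction j with
    | zero => intro x; rfl
    | succ i ih =>
        intro x
        rw [pow_succ, Equiv.Perm.mul_apply, ih, hf]
  obtain ⟨i, hi⟩ := h
  rcases i with n | n
  · rw [Int.ofNat_eq_coe, zpow_natCast] at hi
    rw [← hi, hn]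
  · rw [zpow_negSucc] at hi
    have : (g ^ (n + 1)) q = p := by
      rw [← hi]; exact Equiv.apply_symm_apply _ _
    rw [← this, hn]

lemma geodesic_meet [Finite α] {gA gB k : Equiv.Perm α}
    (h1 : cayley gA k + cayley k gB = cayley gA gB)
    (h2 : cayley gA k + cayley k 1 = cayley gA 1)
    (hsep : ∀ a b : α, gA.SameCycle a b → (gA * gB⁻¹).SameCycle a b → a = b) :
    k = gA := by
  classical
  by_contra hne
  set x := gA * k⁻¹ with hx
  have hx1 : x ≠ 1 := by
    intro hc
    have : gA = k := by
      have := congrArg (fun z => z * k) hc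
      simpa [hx, inv_mul_cancel_right] using this
    exact hne this.symm
  have : ∃ a, x a ≠ a := by
    by_contra hc
    push_neg at hc
    exact hx1 (Equiv.ext fun y => by simp [hc y])
  obtain ⟨a, hxa⟩ := this
  set b := x a with hb
  have hab : a ≠ b := fun h => hxa h.symm
  have hscx : x.SameCycle a b := ⟨1, by rw [zpow_one]⟩
  have hsplit := cc_split_count hab hscx
  have hccx := cc_le_card x
  have hccτx := cc_le_card (Equiv.swap a b * x)
  have hcck := cc_le_card k
  have hccgA := cc_le_card gA
  have hccgAB := cc_le_card (gA * gB⁻¹)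
  have hcckB := cc_le_card (k * gB⁻¹)
  -- rewrite conditions
  simp only [cayley] at h1 h2
  simp only [inv_one, mul_one] at h2
  rw [← hx] at h1 h2
  -- products
  have hprodA : (Equiv.swap a b * x) * k = Equiv.swap a b * gA := by
    rw [mul_assoc, hx, inv_mul_cancel_right]
  have hprodB : (Equiv.swap a b * x) * (k * gB⁻¹) = Equiv.swap a b * (gA * gB⁻¹) := by
    rw [mul_assoc, hx, ← mul_assoc x, inv_mul_cancel_right]
  have hSA : gA.SameCycle a b := by
    by_contra hSA
    have hup := cc_merge_upper hab hSA
    have hsub := l_subadd (Equiv.swap a b * x) k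
    rw [hprodA] at hsub
    have hccτgA := cc_le_card (Equiv.swap a b * gA)
    omega
  have hSB : (gA * gB⁻¹).SameCycle a b := by
    by_contra hSB
    have hup := cc_merge_upper hab hSB
    have hsub := l_subadd (Equiv.swap a b * x) (k * gB⁻¹)
    rw [hprodB] at hsub
    have hccτgAB := cc_le_card (Equiv.swap a b * (gA * gB⁻¹))
    omega
  exact hab (hsep a b hSA hSB)

section Concrete
variable {n m : ℕ} (hn : 1 ≤ n) (hm : 2 ≤ m) (hme : Even m)

theorem sep_lemma (n m : ℕ) (hn : 1 ≤ n) (hm : 2 ≤ m) (hme : Even m)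
    (gB gA : Equiv.Perm (ZMod (m * n)))
    (hgB : ∀ q r : ℕ, r < m →
      gB ((q * m + r : ℕ) : ZMod (m * n)) = ((q * m + (r + 1) % m : ℕ) : ZMod (m * n)))
    (hgA : gA = Equiv.addLeft ((m / 2 : ℕ) : ZMod (m * n)) * gB *
      (Equiv.addLeft ((m / 2 : ℕ) : ZMod (m * n)))⁻¹) :
    ∀ a b : ZMod (m * n), gA.SameCycle a b → (gA * gB⁻¹).SameCycle a b → a = b := by
  haveI : NeZero (m * n) := ⟨Nat.mul_ne_zero (by omega) (by omega)⟩
  have hm0 : 0 < m := by omega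
  have hmn : m ≤ m * n := Nat.le_mul_of_pos_right m (by omega)
  have hm2 : m / 2 * 2 = m := Nat.div_mul_cancel hme.two_dvd
  set c : ZMod (m * n) := ((m / 2 : ℕ) : ZMod (m * n)) with hc
  -- basic val facts
  have hvc : c.val = m / 2 := by
    rw [hc, ZMod.val_cast_of_lt (by omega)]
  have hc0 : c ≠ 0 := by
    intro h
    rw [h, ZMod.val_zero] at hvc
    omega
  have hvnc : (-c).val = m * n - m / 2 := by
    rw [ZMod.neg_val, if_neg hc0, hvc]
  -- gB evaluation
  have gB_eval : ∀ z : ZMod (m * n),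
      gB z = ((z.val / m * m + (z.val % m + 1) % m : ℕ) : ZMod (m * n)) := by
    intro z
    have h := hgB (z.val / m) (z.val % m) (Nat.mod_lt _ hm0)
    have hz : z.val / m * m + z.val % m = z.val := by
      rw [Nat.mul_comm]
      exact Nat.div_add_mod _ _
    rw [hz] at h
    rwa [ZMod.natCast_val, ZMod.cast_id] at h
  have gB_val : ∀ z : ZMod (m * n),
      (gB z).val = z.val / m * m + (z.val % m + 1) % m := by
    intro z
    rw [gB_eval z]
    apply ZMod.val_cast_of_lt
    have h1 : z.val / m < n := (Nat.div_lt_iff_lt_mul hm0).mpr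
      (by rw [Nat.mul_comm n m]; exact z.val_lt)
    calc z.val / m * m + (z.val % m + 1) % m < z.val / m * m + m :=
          Nat.add_lt_add_left (Nat.mod_lt _ hm0) _
      _ = (z.val / m + 1) * m := by ring
      _ ≤ n * m := Nat.mul_le_mul_right m h1
      _ = m * n := Nat.mul_comm n m
  have gB_div : ∀ z : ZMod (m * n), (gB z).val / m = z.val / m := by
    intro z
    rw [gB_val z, Nat.add_comm, Nat.add_mul_div_right _ _ hm0,
      Nat.div_eq_of_lt (Nat.mod_lt _ hm0), Nat.zero_add]
  have gB_mod : ∀ z : ZMod (m * n), (gB z).val % m = (z.val % m + 1) % m := by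
    intro z
    rw [gB_val z, Nat.add_comm, Nat.add_mul_mod_self_right, Nat.mod_mod_of_dvd _ dvd_rfl]
  -- gA evaluation
  have gA_eval : ∀ z : ZMod (m * n), gA z = c + gB (-c + z) := by
    intro z
    rw [hgA]
    simp only [Equiv.Perm.mul_apply, ← hc]
    congr 1
  -- val add mod
  have val_add_mod : ∀ u w : ZMod (m * n), (u + w).val % m = (u.val % m + w.val % m) % m := by
    intro u w
    rw [ZMod.val_add, Nat.mod_mod_of_dvd _ ⟨n, rfl⟩, Nat.add_mod]
  -- (-c).val % m = m / 2
  have hncm : (-c).val % m = m / 2 := by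
    rw [hvnc]
    have h1 : m * (n - 1) + m / 2 = m * n - m / 2 := by
      have h2 : m * (n - 1) + m = m * n := by
        rw [← Nat.mul_succ]
        congr 1
        omega
      omega
    rw [← h1, Nat.mul_comm, Nat.add_comm, Nat.add_mul_mod_self_right, Nat.mod_eq_of_lt (by omega)]
  -- t invariance
  have tA : ∀ z : ZMod (m * n), (gA z).val % m = (z.val % m + 1) % m := by
    intro z
    rw [gA_eval z, val_add_mod, gB_mod, val_add_mod, hncm, hvc]
    set r := z.val % m with hr
    show (m / 2 % m + ((m / 2 + r) % m + 1) % m) % m = (r + 1) % m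
    have : (m / 2 % m + ((m / 2 + r) % m + 1) % m) ≡ r + 1 [MOD m] := by
      calc m / 2 % m + ((m / 2 + r) % m + 1) % m
          ≡ m / 2 + ((m / 2 + r) % m + 1) [MOD m] :=
            Nat.ModEq.add (Nat.mod_modEq _ _) (Nat.mod_modEq _ _)
        _ ≡ m / 2 + (m / 2 + r + 1) [MOD m] :=
            Nat.ModEq.add_left _ (Nat.ModEq.add_right 1 (Nat.mod_modEq _ _))
        _ = m + (r + 1) := by omega
        _ ≡ r + 1 [MOD m] := Nat.add_mod_left m (r + 1)
    exact this
  -- beta invariance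
  have bA : ∀ z : ZMod (m * n), (-c + gA z).val / m = (-c + z).val / m := by
    intro z
    have h : -c + gA z = gB (-c + z) := by
      rw [gA_eval z, neg_add_cancel_left]
    rw [h, gB_div]
  -- main separation
  intro a b hSA hSB
  have hβ : (-c + a).val / m = (-c + b).val / m :=
    sameCycle_invariant (f := fun z : ZMod (m * n) => (-c + z).val / m) bA hSA
  have ht : a.val % m = b.val % m := by
    have hinv : ∀ y : ZMod (m * n), ((gA * gB⁻¹) y).val % m = y.val % m := by
      intro y
      rw [Equiv.Perm.mul_apply, tA]
      have := gB_mod (gB⁻¹ y)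
      rw [show gB (gB⁻¹ y) = y from Equiv.apply_symm_apply gB y] at this
      rw [← this]
    exact sameCycle_invariant (f := fun z : ZMod (m * n) => z.val % m) hinv hSB
  have ht' : (-c + a).val % m = (-c + b).val % m := by
    rw [val_add_mod, val_add_mod, ht]
  have hval : (-c + a).val = (-c + b).val := by
    have h1 := Nat.div_add_mod ((-c + a).val) m
    have h2 := Nat.div_add_mod ((-c + b).val) m
    rw [hβ, ht'] at h1
    exact h1.symm.trans h2
  have : -c + a = -c + b := ZMod.val_injective _ hval
  exact add_left_cancel this

end Concrete


/-- The intersection of Cayley geodesics `Γ(g_A,g_B) ∩ Γ(g_A,e)` is `{g_A}`. -/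
theorem stmt12 (n m : ℕ) (hn : 1 ≤ n) (hm : 2 ≤ m) (hme : Even m)
    (gB gA : Equiv.Perm (ZMod (m * n)))
(hgB : ∀ q r : ℕ, r < m →
      gB ((q * m + r : ℕ) : ZMod (m * n)) = ((q * m + (r + 1) % m : ℕ) : ZMod (m * n)))
    (hgA : gA = Equiv.addLeft ((m / 2 : ℕ) : ZMod (m * n)) * gB *
      (Equiv.addLeft ((m / 2 : ℕ) : ZMod (m * n)))⁻¹)
    :
    geodesic gA gB ∩ geodesic gA 1 = {gA} := by
  haveI : NeZero (m * n) := ⟨Nat.mul_ne_zero (by omega) (by omega)⟩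
  have hsep := sep_lemma n m hn hm hme gB gA hgB hgA
  ext k
  simp only [Set.mem_inter_iff, Set.mem_singleton_iff, geodesic, Set.mem_setOf_eq]
  constructor
  · rintro ⟨h1, h2⟩
    exact geodesic_meet h1 h2 hsep
  · intro hk
    subst hk
    have h0 : cayley k k = 0 := by
      simp only [cayley, mul_inv_cancel, cc_one, Nat.sub_self]
    constructor <;> rw [h0, zero_add]
end
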